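/- arXiv:2005.02784 — 6 statements merged into one kernel-verified Lean document; each statement's English description precedes it below -/
import Mathlib

section
/- Let u ∈ C and λ ∈ L^∞(0,T;L²(Ω)) satisfy the variational inequality (VI), and suppose λ satisfies the pointwise subdifferential conditions for g_T at u. Then for almost every t ∈ (0,T) the following equivalence holds: u(·,t) = 0 almost everywhere in Ω if and only if ‖d(·,t)‖_{L²(Ω)} ≤ κ. -/
open MeasureTheory Set

private lemma ae_slice_right {α β : Type*} [MeasurableSpace α] [MeasurableSpace β]
    {μ : Measure α} {ν : Measure β} [SFinite μ] [SFinite ν] {P : α × β → Prop}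
    (h : ∀ᵐ p ∂μ.prod ν, P p) : ∀ᵐ y ∂ν, ∀ᵐ x ∂μ, P (x, y) := by
  have h2 : ∀ᵐ q ∂ν.prod μ, P q.swap := by
    apply ae_of_ae_map measurable_swap.aemeasurable
    rwa [Measure.prod_swap]
  exact Measure.ae_ae_of_ae_prod h2

/-- Sparsity lemma (Lemma 4.1, directional sparsity in time): if `u ∈ C` and
`λ` satisfy the variational inequality and `λ` satisfies the pointwise
subdifferential conditions for `g_T` at `u`, then for a.e. `t ∈ (0,T)`:
`u(·,t) = 0` a.e. in `Ω` iff `‖d(·,t)‖_{L²(Ω)} ≤ κ`. -/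
theorem sparsity_in_time_equivalence
    (Ω : Set (Fin 3 → ℝ)) (hΩo : IsOpen Ω) (hΩb : Bornology.IsBounded Ω)
    (T : ℝ) (hT : 0 < T)
    (ub uh κ ν : ℝ) (hub : ub < 0) (huh : 0 < uh) (hκ : 0 < κ) (hν : 0 < ν)
    (d u l : (Fin 3 → ℝ) → ℝ → ℝ)
    (hd : MemLp (fun p : (Fin 3 → ℝ) × ℝ => d p.1 p.2) 2
      ((volume.restrict Ω).prod (volume.restrict (Ioo 0 T))))
    (hu_meas : Measurable (fun p : (Fin 3 → ℝ) × ℝ => u p.1 p.2))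
    (hu_mem : ∀ᵐ p ∂((volume.restrict Ω).prod (volume.restrict (Ioo 0 T))),
      ub ≤ u p.1 p.2 ∧ u p.1 p.2 ≤ uh)
    (hl_meas : Measurable (fun p : (Fin 3 → ℝ) × ℝ => l p.1 p.2))
    (hl_bdd : ∃ M : ℝ, ∀ᵐ t ∂(volume.restrict (Ioo 0 T)),
      Real.sqrt (∫ x in Ω, (l x t) ^ 2) ≤ M)
    (hVI : ∀ v : (Fin 3 → ℝ) → ℝ → ℝ,
      Measurable (fun p : (Fin 3 → ℝ) × ℝ => v p.1 p.2) →
      (∀ᵐ p ∂((volume.restrict Ω).prod (volume.restrict (Ioo 0 T))),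
        ub ≤ v p.1 p.2 ∧ v p.1 p.2 ≤ uh) →
      0 ≤ ∫ t in Ioo 0 T, ∫ x in Ω,
        (d x t + κ * l x t + ν * u x t) * (v x t - u x t))
    (hsub : ∀ᵐ t ∂(volume.restrict (Ioo 0 T)),
      ((∀ᵐ x ∂(volume.restrict Ω), u x t = 0) →
        Real.sqrt (∫ x in Ω, (l x t) ^ 2) ≤ 1) ∧
      (¬ (∀ᵐ x ∂(volume.restrict Ω), u x t = 0) →
        ∀ᵐ x ∂(volume.restrict Ω),
          l x t = u x t / Real.sqrt (∫ y in Ω, (u y t) ^ 2))) :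
    ∀ᵐ t ∂(volume.restrict (Ioo 0 T)),
      ((∀ᵐ x ∂(volume.restrict Ω), u x t = 0) ↔
        Real.sqrt (∫ x in Ω, (d x t) ^ 2) ≤ κ) := by
  classical
  set μ : Measure (Fin 3 → ℝ) := volume.restrict Ω with hμdef
  set τ : Measure ℝ := volume.restrict (Ioo 0 T) with hτdef
  haveI : IsFiniteMeasure μ := ⟨by rw [hμdef, Measure.restrict_apply_univ]; exact hΩb.measure_lt_top⟩
  haveI : IsFiniteMeasure τ := ⟨by rw [hτdef, Measure.restrict_apply_univ]; exact measure_Ioo_lt_top⟩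
  set c : ℝ := max uh (-ub) with hcdef
  have hc0 : 0 < c := lt_max_of_lt_left huh
  have huhc : uh ≤ c := le_max_left _ _
  have hubc : -c ≤ ub := by
    have := le_max_right uh (-ub); linarith
  -- measurable representative of d
  obtain ⟨D, hDsm, hdD⟩ : ∃ D : (Fin 3 → ℝ) × ℝ → ℝ, StronglyMeasurable D ∧
      (fun p : (Fin 3 → ℝ) × ℝ => d p.1 p.2) =ᵐ[μ.prod τ] D :=
    ⟨hd.1.mk _, hd.1.stronglyMeasurable_mk, hd.1.ae_eq_mk⟩
  have hDmeas : Measurable D := hDsm.measurable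
  have hDL2 : MemLp D 2 (μ.prod τ) := hd.ae_eq hdD
  have hDint : Integrable D (μ.prod τ) := hDL2.integrable (by norm_num)
  set F : (Fin 3 → ℝ) × ℝ → ℝ := fun p => D p + κ * l p.1 p.2 + ν * u p.1 p.2 with hFdef
  have hFmeas : Measurable F := by
    apply Measurable.add
    apply Measurable.add hDmeas
    · exact hl_meas.const_mul κ
    · exact hu_meas.const_mul ν
  -- Key localization step
  have key : ∀ b : ℝ, ub ≤ b → b ≤ uh → ∀ᵐ p ∂(μ.prod τ), 0 ≤ F p * (b - u p.1 p.2) := by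
    intro b hb1 hb2
    have hbc : |b| ≤ c := by
      rw [abs_le]; exact ⟨by linarith only [hb1, hubc], by linarith only [hb2, huhc]⟩
    have hn : ∀ n : ℕ, ∀ᵐ p ∂(μ.prod τ),
        ¬(F p * (b - u p.1 p.2) < 0 ∧ |l p.1 p.2| ≤ (n : ℝ)) := by
      intro n
      set S : Set ((Fin 3 → ℝ) × ℝ) :=
        {p : (Fin 3 → ℝ) × ℝ | F p * (b - u p.1 p.2) < 0 ∧ |l p.1 p.2| ≤ (n : ℝ)} with hSdef
      have hSmeas : MeasurableSet S :=
        (measurableSet_lt (hFmeas.mul (measurable_const.sub hu_meas)) measurable_const).inter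
          (measurableSet_le hl_meas.abs measurable_const)
      set V : (Fin 3 → ℝ) × ℝ → ℝ := fun p => if p ∈ S then b else u p.1 p.2 with hVdef
      have hVmeas : Measurable V := Measurable.ite hSmeas measurable_const hu_meas
      have hVbd : ∀ᵐ p ∂(μ.prod τ), ub ≤ V p ∧ V p ≤ uh := by
        filter_upwards [hu_mem] with p hp
        by_cases hmem : p ∈ S
        · simp only [hVdef, if_pos hmem]; exact ⟨hb1, hb2⟩
        · simp only [hVdef, if_neg hmem]; exact hp
      set G : (Fin 3 → ℝ) × ℝ → ℝ := fun p => F p * (V p - u p.1 p.2) with hGdef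
      have hGnonpos : ∀ p, G p ≤ 0 := by
        intro p
        by_cases hmem : p ∈ S
        · simp only [hGdef, hVdef, if_pos hmem]
          exact le_of_lt hmem.1
        · simp only [hGdef, hVdef, if_neg hmem, sub_self, mul_zero, le_refl]
      have hGmeas : Measurable G := hFmeas.mul (hVmeas.sub hu_meas)
      have hgint : Integrable
          (fun p : (Fin 3 → ℝ) × ℝ => (|D p| + (κ * n + ν * c)) * (2 * c)) (μ.prod τ) :=
        (hDint.abs.add (integrable_const _)).mul_const _
      have hGint : Integrable G (μ.prod τ) := by
        apply hgint.mono' hGmeas.aestronglyMeasurable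
        filter_upwards [hu_mem] with p hp
        have hup : |u p.1 p.2| ≤ c := by
          rw [abs_le]; exact ⟨by linarith only [hp.1, hubc], by linarith only [hp.2, huhc]⟩
        by_cases hmem : p ∈ S
        · simp only [hGdef, hVdef, if_pos hmem]
          rw [Real.norm_eq_abs, abs_mul]
          have hFexp : F p = D p + κ * l p.1 p.2 + ν * u p.1 p.2 := by rw [hFdef]
          have h1 : |F p| ≤ |D p| + (κ * n + ν * c) := by
            rw [hFexp]
            have habs := abs_add_le (D p + κ * l p.1 p.2) (ν * u p.1 p.2)
            have habs2 := abs_add_le (D p) (κ * l p.1 p.2)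
            have hκl : |κ * l p.1 p.2| ≤ κ * n := by
              rw [abs_mul, abs_of_pos hκ]
              exact mul_le_mul_of_nonneg_left hmem.2 hκ.le
            have hνu : |ν * u p.1 p.2| ≤ ν * c := by
              rw [abs_mul, abs_of_pos hν]
              exact mul_le_mul_of_nonneg_left hup hν.le
            linarith only [habs, habs2, hκl, hνu]
          have h2 : |b - u p.1 p.2| ≤ 2 * c := by
            have h3 := abs_add_le b (-(u p.1 p.2))
            rw [abs_neg] at h3
            have h4 : b - u p.1 p.2 = b + -(u p.1 p.2) := by ring
            rw [h4]
            linarith only [h3, hbc, hup]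
          exact mul_le_mul h1 h2 (abs_nonneg _) (by positivity)
        · simp only [hGdef, hVdef, if_neg hmem, sub_self, mul_zero, norm_zero]
          positivity
      have hvi := hVI (fun x t => V (x, t)) hVmeas hVbd
      have hiter1 : (∫ t, ∫ x, (d x t + κ * l x t + ν * u x t) * (V (x, t) - u x t) ∂μ ∂τ)
          = ∫ t, ∫ x, G (x, t) ∂μ ∂τ := by
        apply integral_congr_ae
        filter_upwards [ae_slice_right hdD] with t ht
        apply integral_congr_ae
        filter_upwards [ht] with x hx
        have hFexp : F (x, t) = D (x, t) + κ * l x t + ν * u x t := by rw [hFdef]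
        simp only [hGdef]
        rw [hFexp, hx]
      have hiter2 : ∫ p, G p ∂(μ.prod τ) = ∫ t, ∫ x, G (x, t) ∂μ ∂τ :=
        integral_prod_symm G hGint
      have hpos : 0 ≤ ∫ p, G p ∂(μ.prod τ) := by
        rw [hiter2, ← hiter1]; exact hvi
      have hneg : ∫ p, G p ∂(μ.prod τ) ≤ 0 := integral_nonpos hGnonpos
      have hzero : ∫ p, -G p ∂(μ.prod τ) = 0 := by
        rw [integral_neg]; linarith only [hpos, hneg]
      have hGzero := (integral_eq_zero_iff_of_nonneg_ae
        (Filter.Eventually.of_forall fun p => neg_nonneg.mpr (hGnonpos p)) hGint.neg).mp hzero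
      filter_upwards [hGzero] with p hp
      intro hmem
      have hGp : G p = 0 := by
        have h5 := hp
        simp only [Pi.zero_apply, neg_eq_zero] at h5
        exact h5
      have hG : G p = F p * (b - u p.1 p.2) := by
        simp only [hGdef, hVdef, if_pos (show p ∈ S from hmem)]
      rw [hG] at hGp
      exact absurd hGp (ne_of_lt hmem.1)
    have hall := ae_all_iff.mpr hn
    filter_upwards [hall] with p hp
    by_contra hneg2
    push_neg at hneg2
    exact hp ⌈|l p.1 p.2|⌉₊ ⟨hneg2, Nat.le_ceil _⟩
  have hsignP : ∀ᵐ p ∂(μ.prod τ),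
      (0 ≤ F p * (uh - u p.1 p.2)) ∧ (0 ≤ F p * (ub - u p.1 p.2)) :=
    (key uh (le_of_lt (hub.trans huh)) le_rfl).and (key ub le_rfl (le_of_lt (hub.trans huh)))
  have hA : ∀ᵐ t ∂τ, ∀ᵐ x ∂μ,
      ((0 ≤ F (x, t) * (uh - u x t)) ∧ (0 ≤ F (x, t) * (ub - u x t))) ∧
      (ub ≤ u x t ∧ u x t ≤ uh) ∧ d x t = D (x, t) :=
    ae_slice_right (hsignP.and (hu_mem.and hdD))
  have hDsq_slice : ∀ᵐ t ∂τ, Integrable (fun x => D (x, t) ^ 2) μ :=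
    hDL2.integrable_sq.prod_left_ae
  have hD_slice : ∀ᵐ t ∂τ, Integrable (fun x => D (x, t)) μ := hDint.prod_left_ae
  filter_upwards [hA, hsub, hDsq_slice, hD_slice] with t hAt hsubt hDsq hD1
  have hdd2 : ∫ x, (d x t) ^ 2 ∂μ = ∫ x, D (x, t) ^ 2 ∂μ := by
    apply integral_congr_ae
    filter_upwards [hAt] with x hx
    rw [hx.2.2]
  rw [hdd2]
  set ID : ℝ := ∫ x, D (x, t) ^ 2 ∂μ with hIDdef
  have hID0 : 0 ≤ ID := integral_nonneg fun x => sq_nonneg _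
  constructor
  · -- forward direction
    intro h0
    have hl_eq : ∀ᵐ x ∂μ, l x t = -(D (x, t)) / κ := by
      filter_upwards [hAt, h0] with x hx hux
      obtain ⟨⟨hs1, hs2⟩, _, _⟩ := hx
      rw [hux] at hs1 hs2
      simp only [sub_zero] at hs1 hs2
      have hF0 : F (x, t) = 0 := by
        rcases lt_trichotomy (F (x, t)) 0 with h | h | h
        · exact absurd hs1 (not_le.mpr (mul_neg_of_neg_of_pos h huh))
        · exact h
        · exact absurd hs2 (not_le.mpr (mul_neg_of_pos_of_neg h hub))
      have hFx : D (x, t) + κ * l x t + ν * u x t = 0 := hF0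
      rw [hux] at hFx
      rw [eq_div_iff hκ.ne']
      linarith only [hFx]
    have hsq : ∫ x, (l x t) ^ 2 ∂μ = κ⁻¹ ^ 2 * ID := by
      calc ∫ x, (l x t) ^ 2 ∂μ = ∫ x, κ⁻¹ ^ 2 * (D (x, t)) ^ 2 ∂μ := by
            apply integral_congr_ae
            filter_upwards [hl_eq] with x hx
            rw [hx]
            field_simp
        _ = κ⁻¹ ^ 2 * ID := integral_const_mul _ _
    have h1 := hsubt.1 h0
    rw [hsq, Real.sqrt_mul (by positivity), Real.sqrt_sq (by positivity)] at h1
    have h2 := mul_le_mul_of_nonneg_left h1 hκ.le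
    calc Real.sqrt ID = κ * (κ⁻¹ * Real.sqrt ID) := by field_simp
      _ ≤ κ * 1 := h2
      _ = κ := mul_one κ
  · -- backward direction
    intro hdk
    by_contra h0
    have hlr := hsubt.2 h0
    have hu_slice_meas : Measurable (fun x => u x t) := hu_meas.comp (measurable_prodMk_right)
    have huc : ∀ᵐ x ∂μ, |u x t| ≤ c := by
      filter_upwards [hAt] with x hx
      obtain ⟨-, ⟨hb1, hb2⟩, -⟩ := hx
      rw [abs_le]
      exact ⟨by linarith only [hb1, hubc], by linarith only [hb2, huhc]⟩
    have hu_sq_int : Integrable (fun x => u x t ^ 2) μ := by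
      apply Integrable.mono' (integrable_const (c ^ 2)) (hu_slice_meas.pow_const 2).aestronglyMeasurable
      filter_upwards [huc] with x hx
      rw [Real.norm_eq_abs, abs_pow]
      exact pow_le_pow_left₀ (abs_nonneg _) hx 2
    set Iu : ℝ := ∫ x, u x t ^ 2 ∂μ with hIudef
    have hIu0 : 0 ≤ Iu := integral_nonneg fun x => sq_nonneg _
    set r : ℝ := Real.sqrt Iu with hrdef
    have hr0 : 0 ≤ r := Real.sqrt_nonneg _
    have hr_sq : r ^ 2 = Iu := Real.sq_sqrt hIu0
    have hr_pos : 0 < r := by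
      rcases hr0.lt_or_eq with h | h
      · exact h
      · exfalso
        have hIu_eq : Iu = 0 := by rw [← hr_sq, ← h]; ring
        have hz := (integral_eq_zero_iff_of_nonneg_ae
          (Filter.Eventually.of_forall fun x => sq_nonneg (u x t)) hu_sq_int).mp hIu_eq
        apply h0
        filter_upwards [hz] with x hx
        have : u x t ^ 2 = 0 := hx
        exact pow_eq_zero_iff (by norm_num) |>.mp this
    have hptw : ∀ᵐ x ∂μ, D (x, t) * u x t + (κ / r) * u x t ^ 2 + ν * u x t ^ 2 ≤ 0 := by
      filter_upwards [hAt, hlr] with x hx hlx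
      obtain ⟨⟨hs1, hs2⟩, ⟨hb1, hb2⟩, -⟩ := hx
      have hF : F (x, t) = D (x, t) + κ * (u x t / r) + ν * u x t := by
        show D (x, t) + κ * l x t + ν * u x t = _
        rw [hlx]
      have heq : D (x, t) * u x t + (κ / r) * u x t ^ 2 + ν * u x t ^ 2 = F (x, t) * u x t := by
        rw [hF]; ring
      rw [heq]
      rcases lt_trichotomy (u x t) 0 with hu0 | hu0 | hu0
      · have hF0 : 0 ≤ F (x, t) := by
          by_contra hFneg
          push_neg at hFneg
          have h5 : 0 < uh - u x t := by linarith only [hu0, huh]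
          exact absurd hs1 (not_le.mpr (mul_neg_of_neg_of_pos hFneg h5))
        exact mul_nonpos_iff.mpr (Or.inl ⟨hF0, hu0.le⟩)
      · rw [hu0]; simp
      · have hF0 : F (x, t) ≤ 0 := by
          by_contra hFneg
          push_neg at hFneg
          have h5 : ub - u x t < 0 := by linarith only [hu0, hub]
          exact absurd hs2 (not_le.mpr (mul_neg_of_pos_of_neg hFneg h5))
        exact mul_nonpos_iff.mpr (Or.inr ⟨hF0, hu0.le⟩)
    have hDu_int : Integrable (fun x => D (x, t) * u x t) μ := by
      apply Integrable.mono' (hD1.abs.const_mul c)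
        ((hDmeas.comp measurable_prodMk_right).mul hu_slice_meas).aestronglyMeasurable
      filter_upwards [huc] with x hx
      rw [Real.norm_eq_abs, Pi.mul_apply, Function.comp_apply, abs_mul, mul_comm]
      exact mul_le_mul_of_nonneg_right hx (abs_nonneg _)
    set IDu : ℝ := ∫ x, D (x, t) * u x t ∂μ with hIDudef
    have hsum_le : ∫ x, (D (x, t) * u x t + (κ / r) * u x t ^ 2 + ν * u x t ^ 2) ∂μ ≤ 0 :=
      integral_nonpos_of_ae hptw
    have hi1 : Integrable (fun x => (κ / r) * u x t ^ 2) μ := hu_sq_int.const_mul _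
    have hi2 : Integrable (fun x => ν * u x t ^ 2) μ := hu_sq_int.const_mul _
    have hi3 : Integrable (fun x => D (x, t) * u x t + (κ / r) * u x t ^ 2) μ :=
      hDu_int.add hi1
    have hsum_eq : ∫ x, (D (x, t) * u x t + (κ / r) * u x t ^ 2 + ν * u x t ^ 2) ∂μ
        = IDu + (κ / r) * Iu + ν * Iu := by
      rw [integral_add hi3 hi2, integral_add hDu_int hi1, integral_const_mul, integral_const_mul]
    have hkey2 : IDu ≤ -(κ / r) * Iu - ν * Iu := by
      rw [hsum_eq] at hsum_le; linarith only [hsum_le]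
    set s : ℝ := Real.sqrt ID with hsdef
    have hs0 : 0 ≤ s := Real.sqrt_nonneg _
    have hs_sq : s ^ 2 = ID := Real.sq_sqrt hID0
    have hCS : 0 ≤ ∫ x, (r * D (x, t) + s * u x t) ^ 2 ∂μ :=
      integral_nonneg fun x => sq_nonneg _
    have hexp : ∫ x, (r * D (x, t) + s * u x t) ^ 2 ∂μ
        = r ^ 2 * ID + (2 * (r * s)) * IDu + s ^ 2 * Iu := by
      have hptw2 : ∀ x, (r * D (x, t) + s * u x t) ^ 2
          = r ^ 2 * D (x, t) ^ 2 + (2 * (r * s)) * (D (x, t) * u x t) + s ^ 2 * u x t ^ 2 := by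
        intro x; ring
      simp_rw [hptw2]
      have hj1 : Integrable (fun x => r ^ 2 * D (x, t) ^ 2) μ := hDsq.const_mul _
      have hj2 : Integrable (fun x => (2 * (r * s)) * (D (x, t) * u x t)) μ := hDu_int.const_mul _
      have hj3 : Integrable (fun x => s ^ 2 * u x t ^ 2) μ := hu_sq_int.const_mul _
      have hj12 : Integrable (fun x => r ^ 2 * D (x, t) ^ 2 + (2 * (r * s)) * (D (x, t) * u x t)) μ :=
        hj1.add hj2
      rw [integral_add hj12 hj3, integral_add hj1 hj2,
        integral_const_mul, integral_const_mul, integral_const_mul]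
    rw [hexp] at hCS
    have hfrac : (κ / r) * Iu = κ * r := by
      rw [← hr_sq]; field_simp
    have hνIu : ν * Iu = ν * r ^ 2 := by rw [hr_sq]
    rcases hs0.lt_or_eq with hs_pos | hs_zero
    · -- s > 0
      have hprod : Iu * ID = (r * s) ^ 2 := by rw [← hr_sq, ← hs_sq]; ring
      have e1 : r ^ 2 * ID = (r * s) ^ 2 := by rw [hr_sq, hprod]
      have e2 : s ^ 2 * Iu = (r * s) ^ 2 := by rw [hs_sq, mul_comm, hprod]
      have h9 : 0 ≤ 2 * (r * s) * ((r * s) + IDu) := by linarith only [hCS, e1, e2]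
      have hrs : (0:ℝ) < 2 * (r * s) := by positivity
      have h10 : -(r * s) ≤ IDu := by
        have := (mul_nonneg_iff_of_pos_left hrs).mp h9
        linarith only [this]
      have hsk : s ≤ κ := hdk
      have h11 : r * s ≤ r * κ := mul_le_mul_of_nonneg_left hsk hr0
      have h12 : (0:ℝ) < ν * (r * r) := mul_pos hν (mul_pos hr_pos hr_pos)
      linarith only [h10, hkey2, hfrac, hνIu, h11, h12]
    · -- s = 0, so ID = 0, D = 0 a.e.
      have hID_eq : ID = 0 := by rw [← hs_sq, ← hs_zero]; ring
      have hD0 := (integral_eq_zero_iff_of_nonneg_ae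
        (Filter.Eventually.of_forall fun x => sq_nonneg (D (x, t))) hDsq).mp hID_eq
      have hIDu0 : IDu = 0 := by
        rw [hIDudef]
        apply integral_eq_zero_of_ae
        filter_upwards [hD0] with x hx
        have : D (x, t) ^ 2 = 0 := hx
        have hDz : D (x, t) = 0 := pow_eq_zero_iff (by norm_num) |>.mp this
        rw [hDz, zero_mul]
        rfl
      have h12 : (0:ℝ) < ν * (r * r) := mul_pos hν (mul_pos hr_pos hr_pos)
      have h13 : (0:ℝ) < κ * r := mul_pos hκ hr_pos
      linarith only [hkey2, hfrac, hνIu, hIDu0, h12, h13]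
end

section
/- Let u ∈ C and λ satisfy the variational inequality (VI), and suppose λ ∈ L^∞(Ω;L²(0,T)) satisfies: for a.e. x ∈ Ω, ‖λ(x,·)‖_{L²(0,T)} ≤ 1 whenever u(x,·) = 0 a.e. in (0,T), and λ(x,·) = u(x,·)/‖u(x,·)‖_{L²(0,T)} whenever u(x,·) ≠ 0 in L²(0,T). Then for almost every x ∈ Ω: u(x,·) = 0 almost everywhere in (0,T) if and only if ‖d(x,·)‖_{L²(0,T)} ≤ κ. -/
open MeasureTheory Set ENNReal

lemma cs_aux {α : Type*} [MeasurableSpace α] {μ : Measure α} {f g : α → ℝ}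
    (hf : MemLp f 2 μ) (hg : MemLp g 2 μ) :
    |∫ a, f a * g a ∂μ| ≤ Real.sqrt (∫ a, f a ^ 2 ∂μ) * Real.sqrt (∫ a, g a ^ 2 ∂μ) := by
  have h2 : (2:ℝ).HolderConjugate 2 := Real.HolderConjugate.two_two
  have hf' : MemLp f (ENNReal.ofReal 2) μ := by
    rw [show ENNReal.ofReal 2 = 2 by simp]; exact hf
  have hg' : MemLp g (ENNReal.ofReal 2) μ := by
    rw [show ENNReal.ofReal 2 = 2 by simp]; exact hg
  have key := integral_mul_norm_le_Lp_mul_Lq h2 hf' hg'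
  have h1 : |∫ a, f a * g a ∂μ| ≤ ∫ a, ‖f a‖ * ‖g a‖ ∂μ := by
    calc |∫ a, f a * g a ∂μ| ≤ ∫ a, ‖f a * g a‖ ∂μ := by
          rw [← Real.norm_eq_abs]; exact norm_integral_le_integral_norm _
      _ = ∫ a, ‖f a‖ * ‖g a‖ ∂μ := by simp [norm_mul]
  have hfr : ∫ a, ‖f a‖ ^ (2:ℝ) ∂μ = ∫ a, f a ^ 2 ∂μ := by
    refine integral_congr_ae (Filter.Eventually.of_forall fun a => ?_)
    beta_reduce
    rw [show (‖f a‖:ℝ) ^ (2:ℝ) = ‖f a‖ ^ (2:ℕ) by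
      rw [← Real.rpow_natCast]; norm_num]
    simp [sq_abs]
  have hgr : ∫ a, ‖g a‖ ^ (2:ℝ) ∂μ = ∫ a, g a ^ 2 ∂μ := by
    refine integral_congr_ae (Filter.Eventually.of_forall fun a => ?_)
    beta_reduce
    rw [show (‖g a‖:ℝ) ^ (2:ℝ) = ‖g a‖ ^ (2:ℕ) by
      rw [← Real.rpow_natCast]; norm_num]
    simp [sq_abs]
  rw [hfr, hgr] at key
  calc |∫ a, f a * g a ∂μ| ≤ (∫ a, f a ^ 2 ∂μ) ^ (1/(2:ℝ)) * (∫ a, g a ^ 2 ∂μ) ^ (1/(2:ℝ)) :=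
        h1.trans key
    _ = Real.sqrt (∫ a, f a ^ 2 ∂μ) * Real.sqrt (∫ a, g a ^ 2 ∂μ) := by
        rw [Real.sqrt_eq_rpow, Real.sqrt_eq_rpow]

/-- Directional sparsity in space: if `u ∈ C` and `λ` satisfy the variational
inequality and `λ` satisfies the pointwise subdifferential conditions for
`g_Ω` at `u`, then for a.e. `x ∈ Ω`: `u(x,·) = 0` a.e. in `(0,T)` iff
`‖d(x,·)‖_{L²(0,T)} ≤ κ`. -/
theorem sparsity_in_space_equivalence
    (Ω : Set (Fin 3 → ℝ)) (hΩo : IsOpen Ω) (hΩb : Bornology.IsBounded Ω)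
    (T : ℝ) (hT : 0 < T)
    (ub uh κ ν : ℝ) (hub : ub < 0) (huh : 0 < uh) (hκ : 0 < κ) (hν : 0 < ν)
    (d u l : (Fin 3 → ℝ) → ℝ → ℝ)
    (hd : MemLp (fun p : (Fin 3 → ℝ) × ℝ => d p.1 p.2) 2
      ((volume.restrict Ω).prod (volume.restrict (Ioo 0 T))))
    (hu_meas : Measurable (fun p : (Fin 3 → ℝ) × ℝ => u p.1 p.2))
    (hu_mem : ∀ᵐ p ∂((volume.restrict Ω).prod (volume.restrict (Ioo 0 T))),
      ub ≤ u p.1 p.2 ∧ u p.1 p.2 ≤ uh)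
    (hl_meas : Measurable (fun p : (Fin 3 → ℝ) × ℝ => l p.1 p.2))
    (hl_bdd : ∃ M : ℝ, ∀ᵐ x ∂(volume.restrict Ω),
      Real.sqrt (∫ t in Ioo 0 T, (l x t) ^ 2) ≤ M)
    (hVI : ∀ v : (Fin 3 → ℝ) → ℝ → ℝ,
      Measurable (fun p : (Fin 3 → ℝ) × ℝ => v p.1 p.2) →
      (∀ᵐ p ∂((volume.restrict Ω).prod (volume.restrict (Ioo 0 T))),
        ub ≤ v p.1 p.2 ∧ v p.1 p.2 ≤ uh) →
      0 ≤ ∫ x in Ω, ∫ t in Ioo 0 T,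
        (d x t + κ * l x t + ν * u x t) * (v x t - u x t))
    (hsub : ∀ᵐ x ∂(volume.restrict Ω),
      ((∀ᵐ t ∂(volume.restrict (Ioo 0 T)), u x t = 0) →
        Real.sqrt (∫ t in Ioo 0 T, (l x t) ^ 2) ≤ 1) ∧
      (¬ (∀ᵐ t ∂(volume.restrict (Ioo 0 T)), u x t = 0) →
        ∀ᵐ t ∂(volume.restrict (Ioo 0 T)),
          l x t = u x t / Real.sqrt (∫ s in Ioo 0 T, (u x s) ^ 2))) :
    ∀ᵐ x ∂(volume.restrict Ω),
      ((∀ᵐ t ∂(volume.restrict (Ioo 0 T)), u x t = 0) ↔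
        Real.sqrt (∫ t in Ioo 0 T, (d x t) ^ 2) ≤ κ) := by
  classical
  haveI : Fact (volume Ω < ∞) := ⟨hΩb.measure_lt_top⟩
  haveI : Fact (volume (Ioo (0:ℝ) T) < ∞) := ⟨by simp [Real.volume_Ioo]⟩
  set μx : Measure (Fin 3 → ℝ) := volume.restrict Ω with hμx
  set μt : Measure ℝ := volume.restrict (Ioo (0:ℝ) T) with hμt
  set μ : Measure ((Fin 3 → ℝ) × ℝ) := μx.prod μt with hμ
  -- measurable version of d
  set d' : (Fin 3 → ℝ) × ℝ → ℝ := hd.1.mk _ with hd'def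
  have hd'meas : Measurable d' := hd.1.stronglyMeasurable_mk.measurable
  have hdd' : (fun p : (Fin 3 → ℝ) × ℝ => d p.1 p.2) =ᵐ[μ] d' := hd.1.ae_eq_mk
  have hd' : MemLp d' 2 μ := hd.ae_eq hdd'
  set B : ℝ := max uh (-ub) with hBdef
  have hB0 : 0 ≤ B := le_trans huh.le (le_max_left _ _)
  have habsu : ∀ a : ℝ, ub ≤ a → a ≤ uh → |a| ≤ B := by
    intro a h1 h2
    rw [abs_le]
    constructor
    · have : -B ≤ ub := by
        have := le_max_right uh (-ub); linarith
      linarith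
    · exact h2.trans (le_max_left _ _)
  -- Key pointwise variational inequality
  have key : ∀ c : ℝ, ub ≤ c → c ≤ uh →
      ∀ᵐ p ∂μ, 0 ≤ (d' p + κ * l p.1 p.2 + ν * u p.1 p.2) * (c - u p.1 p.2) := by
    intro c hc1 hc2
    have hF'meas : Measurable (fun p : (Fin 3 → ℝ) × ℝ =>
        d' p + κ * l p.1 p.2 + ν * u p.1 p.2) :=
      (hd'meas.add (hl_meas.const_mul κ)).add (hu_meas.const_mul ν)
    have hnull : ∀ n : ℕ, ∀ᵐ p ∂μ,
        ¬ ((d' p + κ * l p.1 p.2 + ν * u p.1 p.2) * (c - u p.1 p.2) < 0 ∧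
           |l p.1 p.2| ≤ (n:ℝ) ∧ |d' p| ≤ (n:ℝ)) := by
      intro n
      set S : Set ((Fin 3 → ℝ) × ℝ) :=
        {p | (d' p + κ * l p.1 p.2 + ν * u p.1 p.2) * (c - u p.1 p.2) < 0 ∧
             |l p.1 p.2| ≤ (n:ℝ) ∧ |d' p| ≤ (n:ℝ)} with hSdef
      have hSmeas : MeasurableSet S := by
        apply MeasurableSet.inter
        · exact measurableSet_lt (hF'meas.mul (measurable_const.sub hu_meas)) measurable_const
        · exact MeasurableSet.inter
            (measurableSet_le hl_meas.abs measurable_const)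
            (measurableSet_le hd'meas.abs measurable_const)
      set v : (Fin 3 → ℝ) → ℝ → ℝ := fun x t => if (x, t) ∈ S then c else u x t with hvdef
      have hv_meas : Measurable (fun p : (Fin 3 → ℝ) × ℝ => v p.1 p.2) :=
        Measurable.ite hSmeas measurable_const hu_meas
      have hv_mem : ∀ᵐ p ∂μ, ub ≤ v p.1 p.2 ∧ v p.1 p.2 ≤ uh := by
        filter_upwards [hu_mem] with p hp
        simp only [hvdef]
        split_ifs with h
        · exact ⟨hc1, hc2⟩
        · exact hp
      have hVIv := hVI v hv_meas hv_mem
      set G' : (Fin 3 → ℝ) × ℝ → ℝ := fun p =>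
        (d' p + κ * l p.1 p.2 + ν * u p.1 p.2) * (v p.1 p.2 - u p.1 p.2) with hG'def
      have hG'meas : Measurable G' := hF'meas.mul (hv_meas.sub hu_meas)
      set C : ℝ := ((n:ℝ) + κ * n + ν * B) * (|c| + B) with hCdef
      have hbound : ∀ᵐ p ∂μ, ‖G' p‖ ≤ C := by
        filter_upwards [hu_mem] with p hp
        by_cases hpS : p ∈ S
        · have hvp : v p.1 p.2 = c := by simp only [hvdef]; rw [if_pos hpS]
          have h1 : |d' p + κ * l p.1 p.2 + ν * u p.1 p.2| ≤ (n:ℝ) + κ * n + ν * B := by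
            refine (abs_add_three _ _ _).trans ?_
            have hl' : |κ * l p.1 p.2| ≤ κ * n := by
              rw [abs_mul, abs_of_pos hκ]
              exact mul_le_mul_of_nonneg_left hpS.2.1 hκ.le
            have hu' : |ν * u p.1 p.2| ≤ ν * B := by
              rw [abs_mul, abs_of_pos hν]
              exact mul_le_mul_of_nonneg_left (habsu _ hp.1 hp.2) hν.le
            have hd'' : |d' p| ≤ (n:ℝ) := hpS.2.2
            linarith
          have h2 : |v p.1 p.2 - u p.1 p.2| ≤ |c| + B := by
            rw [hvp]
            exact (abs_sub _ _).trans (by linarith [habsu _ hp.1 hp.2])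
          rw [Real.norm_eq_abs, hG'def]
          calc |(d' p + κ * l p.1 p.2 + ν * u p.1 p.2) * (v p.1 p.2 - u p.1 p.2)|
              = |d' p + κ * l p.1 p.2 + ν * u p.1 p.2| * |v p.1 p.2 - u p.1 p.2| := abs_mul _ _
            _ ≤ ((n:ℝ) + κ * n + ν * B) * (|c| + B) := by
                apply mul_le_mul h1 h2 (abs_nonneg _)
                positivity
        · have hvp : v p.1 p.2 = u p.1 p.2 := by simp only [hvdef]; rw [if_neg hpS]
          simp only [hG'def, hvp, sub_self, mul_zero, norm_zero]
          positivity
      have hG'int : Integrable G' μ :=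
        (integrable_const C).mono' hG'meas.aestronglyMeasurable hbound
      have hGeq : (fun p : (Fin 3 → ℝ) × ℝ =>
          (d p.1 p.2 + κ * l p.1 p.2 + ν * u p.1 p.2) * (v p.1 p.2 - u p.1 p.2)) =ᵐ[μ] G' := by
        filter_upwards [hdd'] with p hp
        simp only [hG'def]
        rw [hp]
      have hGint : Integrable (fun p : (Fin 3 → ℝ) × ℝ =>
          (d p.1 p.2 + κ * l p.1 p.2 + ν * u p.1 p.2) * (v p.1 p.2 - u p.1 p.2)) μ :=
        hG'int.congr hGeq.symm
      have hprod : ∫ p, (d p.1 p.2 + κ * l p.1 p.2 + ν * u p.1 p.2) *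
          (v p.1 p.2 - u p.1 p.2) ∂μ
          = ∫ x, ∫ t, (d x t + κ * l x t + ν * u x t) * (v x t - u x t) ∂μt ∂μx :=
        integral_prod _ hGint
      have hge : 0 ≤ ∫ p, G' p ∂μ := by
        rw [← integral_congr_ae hGeq, hprod]
        exact hVIv
      have hle : ∫ p, G' p ∂μ ≤ 0 := by
        apply integral_nonpos
        intro p
        simp only [Pi.zero_apply]
        by_cases hpS : p ∈ S
        · have hvp : v p.1 p.2 = c := by simp only [hvdef]; rw [if_pos hpS]
          simp only [hG'def, hvp]
          exact le_of_lt hpS.1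
        · have hvp : v p.1 p.2 = u p.1 p.2 := by simp only [hvdef]; rw [if_neg hpS]
          simp only [hG'def, hvp, sub_self, mul_zero, le_refl]
      have hzero : ∫ p, G' p ∂μ = 0 := le_antisymm hle hge
      have hnegz : (fun p => -G' p) =ᵐ[μ] 0 := by
        have hnn : 0 ≤ᵐ[μ] fun p => -G' p := by
          refine Filter.Eventually.of_forall fun p => ?_
          simp only [Pi.zero_apply]
          by_cases hpS : p ∈ S
          · have hvp : v p.1 p.2 = c := by simp only [hvdef]; rw [if_pos hpS]
            simp only [hG'def, hvp, neg_nonneg]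
            exact le_of_lt hpS.1
          · have hvp : v p.1 p.2 = u p.1 p.2 := by simp only [hvdef]; rw [if_neg hpS]
            simp only [hG'def, hvp, sub_self, mul_zero, neg_zero, le_refl]
        refine (integral_eq_zero_iff_of_nonneg_ae hnn hG'int.neg).mp ?_
        rw [integral_neg, hzero, neg_zero]
      filter_upwards [hnegz] with p hp
      intro hcontra
      have hG'p : G' p = 0 := by
        have := hp
        simpa [neg_eq_zero] using this
      have : G' p < 0 := by
        have hpS : p ∈ S := hcontra
        have hvp : v p.1 p.2 = c := by simp only [hvdef]; rw [if_pos hpS]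
        simp only [hG'def, hvp]
        exact hpS.1
      linarith [hG'p, this]
    have hall : ∀ᵐ p ∂μ, ∀ n : ℕ,
        ¬ ((d' p + κ * l p.1 p.2 + ν * u p.1 p.2) * (c - u p.1 p.2) < 0 ∧
           |l p.1 p.2| ≤ (n:ℝ) ∧ |d' p| ≤ (n:ℝ)) := ae_all_iff.mpr hnull
    filter_upwards [hall] with p hp
    by_contra hneg
    push_neg at hneg
    obtain ⟨n, hn⟩ := exists_nat_ge (max |l p.1 p.2| |d' p|)
    exact hp n ⟨hneg, (le_max_left _ _).trans hn, (le_max_right _ _).trans hn⟩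
  -- apply key with c = 0, uh, ub and slice everything
  have h0 := Measure.ae_ae_of_ae_prod (key 0 hub.le huh.le)
  have hU2 := Measure.ae_ae_of_ae_prod (key uh (by linarith) le_rfl)
  have hL2 := Measure.ae_ae_of_ae_prod (key ub le_rfl (by linarith))
  have hbb := Measure.ae_ae_of_ae_prod hu_mem
  have hde := Measure.ae_ae_of_ae_prod hdd'
  have hdsq := hd'.integrable_sq.prod_right_ae
  filter_upwards [h0, hU2, hL2, hbb, hde, hdsq, hsub] with x h0x hUx hLx hbx hdex hdsqx hsubx
  have hdm : Measurable fun t => d' (x, t) := hd'meas.comp measurable_prodMk_left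
  have hum : Measurable fun t => u x t := hu_meas.comp measurable_prodMk_left
  have hdL2 : MemLp (fun t => d' (x, t)) 2 μt :=
    (memLp_two_iff_integrable_sq hdm.aestronglyMeasurable).mpr hdsqx
  have hdA : ∫ t, (d x t) ^ 2 ∂μt = ∫ t, d' (x, t) ^ 2 ∂μt := by
    refine integral_congr_ae ?_
    filter_upwards [hdex] with t ht
    rw [ht]
  have hA0 : (0:ℝ) ≤ ∫ t, d' (x, t) ^ 2 ∂μt := integral_nonneg fun t => sq_nonneg _
  have husq : Integrable (fun t => u x t ^ 2) μt := by
    refine (integrable_const (B ^ 2)).mono' (hum.pow_const 2).aestronglyMeasurable ?_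
    filter_upwards [hbx] with t ht
    rw [Real.norm_eq_abs, abs_pow]
    nlinarith [habsu _ ht.1 ht.2, abs_nonneg (u x t)]
  have huL2 : MemLp (fun t => u x t) 2 μt :=
    (memLp_two_iff_integrable_sq hum.aestronglyMeasurable).mpr husq
  constructor
  · -- u = 0 a.e. implies ‖d‖ ≤ κ
    intro hu0
    have heq : ∀ᵐ t ∂μt, d' (x, t) = -(κ * l x t) := by
      filter_upwards [hu0, hUx, hLx] with t ht hU hL
      rw [ht] at hU hL
      have ha1 : 0 ≤ d' (x, t) + κ * l x t := by nlinarith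
      have ha2 : d' (x, t) + κ * l x t ≤ 0 := by nlinarith
      linarith
    have hlsq : ∀ᵐ t ∂μt, l x t ^ 2 = (1 / κ ^ 2) * d' (x, t) ^ 2 := by
      filter_upwards [heq] with t ht
      have hκ' : κ ≠ 0 := ne_of_gt hκ
      rw [ht]
      field_simp
    have hlint : ∫ t, l x t ^ 2 ∂μt = (1 / κ ^ 2) * ∫ t, d' (x, t) ^ 2 ∂μt := by
      rw [integral_congr_ae hlsq, integral_const_mul]
    have h1 := hsubx.1 hu0
    rw [hlint] at h1
    have hsq : Real.sqrt ((1 / κ ^ 2) * ∫ t, d' (x, t) ^ 2 ∂μt)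
        = (1 / κ) * Real.sqrt (∫ t, d' (x, t) ^ 2 ∂μt) := by
      rw [show (1:ℝ) / κ ^ 2 = (1 / κ) ^ 2 by ring, Real.sqrt_mul (sq_nonneg _),
        Real.sqrt_sq (by positivity)]
    rw [hsq] at h1
    rw [hdA]
    have h2 : κ * (1 / κ * Real.sqrt (∫ t, d' (x, t) ^ 2 ∂μt))
        = Real.sqrt (∫ t, d' (x, t) ^ 2 ∂μt) := by field_simp
    nlinarith [mul_le_mul_of_nonneg_left h1 hκ.le]
  · -- ‖d‖ ≤ κ implies u = 0 a.e.
    intro hdk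
    by_contra hu0
    have hlu := hsubx.2 hu0
    have hU0 : (0:ℝ) ≤ ∫ t, u x t ^ 2 ∂μt := integral_nonneg fun t => sq_nonneg _
    have hUpos : 0 < ∫ t, u x t ^ 2 ∂μt := by
      rcases hU0.lt_or_eq with h | h
      · exact h
      · exfalso
        apply hu0
        have := (integral_eq_zero_iff_of_nonneg_ae
          (Filter.Eventually.of_forall fun t => sq_nonneg (u x t)) husq).mp h.symm
        filter_upwards [this] with t ht
        have : u x t ^ 2 = 0 := ht
        exact pow_eq_zero_iff (n := 2) (by norm_num) |>.mp this
    set N : ℝ := Real.sqrt (∫ s, u x s ^ 2 ∂μt) with hNdef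
    have hN : 0 < N := Real.sqrt_pos.mpr hUpos
    have hN2 : N ^ 2 = ∫ t, u x t ^ 2 ∂μt := Real.sq_sqrt hU0
    have hptw : ∀ᵐ t ∂μt, d' (x, t) * u x t ≤ -(κ / N) * u x t ^ 2 - ν * u x t ^ 2 := by
      filter_upwards [h0x, hlu] with t h0t hlt
      rw [hlt] at h0t
      have hNne : N ≠ 0 := ne_of_gt hN
      have hexp : (d' (x, t) + κ * (u x t / N) + ν * u x t) * (0 - u x t)
          = -(d' (x, t) * u x t) - (κ / N) * u x t ^ 2 - ν * u x t ^ 2 := by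
        field_simp
        ring
      rw [hexp] at h0t
      linarith
    have hdint : Integrable (fun t => d' (x, t) * u x t) μt := by
      have hd'int : Integrable (fun t => d' (x, t)) μt := hdL2.integrable one_le_two
      refine (hd'int.norm.const_mul B).mono'
        ((hdm.mul hum).aestronglyMeasurable) ?_
      filter_upwards [hbx] with t ht
      rw [Real.norm_eq_abs, abs_mul]
      have h1 := habsu _ ht.1 ht.2
      have h2 : (0:ℝ) ≤ |d' (x, t)| := abs_nonneg _
      calc |d' (x, t)| * |u x t| ≤ |d' (x, t)| * B := mul_le_mul_of_nonneg_left h1 h2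
        _ = B * ‖d' (x, t)‖ := by rw [Real.norm_eq_abs]; ring
    have hrint : Integrable (fun t => -(κ / N) * u x t ^ 2 - ν * u x t ^ 2) μt :=
      (husq.const_mul _).sub (husq.const_mul _)
    have hint_le := integral_mono_ae hdint hrint hptw
    have hrval : ∫ t, (-(κ / N) * u x t ^ 2 - ν * u x t ^ 2) ∂μt
        = -(κ / N) * (∫ t, u x t ^ 2 ∂μt) - ν * (∫ t, u x t ^ 2 ∂μt) := by
      rw [integral_sub (husq.const_mul _) (husq.const_mul _), integral_const_mul,
        integral_const_mul]
    rw [hrval] at hint_le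
    have hcs := cs_aux (μ := μt) hdL2 huL2
    have hsqrtA : Real.sqrt (∫ t, d' (x, t) ^ 2 ∂μt) ≤ κ := by
      rw [hdA] at hdk; exact hdk
    have hsqrtU : Real.sqrt (∫ t, u x t ^ 2 ∂μt) = N := rfl
    rw [hsqrtU] at hcs
    have hlow : -(κ * N) ≤ ∫ t, d' (x, t) * u x t ∂μt := by
      have h1 := neg_abs_le (∫ t, d' (x, t) * u x t ∂μt)
      have h2 : Real.sqrt (∫ t, d' (x, t) ^ 2 ∂μt) * N ≤ κ * N :=
        mul_le_mul_of_nonneg_right hsqrtA hN.le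
      linarith [hcs]
    have hdivN : (κ / N) * (∫ t, u x t ^ 2 ∂μt) = κ * N := by
      rw [← hN2]
      field_simp
    nlinarith [hint_le, hlow, hdivN, mul_pos hν hUpos]
end

section
/- Let u ∈ C and λ satisfy the variational inequality (VI), and suppose λ ∈ L^∞(Q) satisfies the pointwise subdifferential conditions for g_Q at u: |λ(x,t)| ≤ 1 a.e. in Q, λ(x,t) = 1 for a.e. (x,t) with u(x,t) > 0, and λ(x,t) = −1 for a.e. (x,t) with u(x,t) < 0. Then for almost every (x,t) ∈ Q: u(x,t) = 0 if and only if |d(x,t)| ≤ κ. -/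
open MeasureTheory Set

/-- Full sparsity: if `u ∈ C` and `λ` satisfy the variational inequality and
`λ` satisfies the pointwise subdifferential conditions for `g_Q` at `u`, then
for a.e. `(x,t) ∈ Q`: `u(x,t) = 0` iff `|d(x,t)| ≤ κ`. -/
theorem full_sparsity_equivalence
    (Ω : Set (Fin 3 → ℝ)) (hΩo : IsOpen Ω) (hΩb : Bornology.IsBounded Ω)
    (T : ℝ) (hT : 0 < T)
    (ub uh κ ν : ℝ) (hub : ub < 0) (huh : 0 < uh) (hκ : 0 < κ) (hν : 0 < ν)
    (d u l : (Fin 3 → ℝ) × ℝ → ℝ)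
    (hd : MemLp d 2 ((volume.restrict Ω).prod (volume.restrict (Ioo 0 T))))
    (hu_meas : Measurable u)
    (hu_mem : ∀ᵐ p ∂((volume.restrict Ω).prod (volume.restrict (Ioo 0 T))),
      ub ≤ u p ∧ u p ≤ uh)
    (hl_meas : Measurable l)
    (hl_sub : ∀ᵐ p ∂((volume.restrict Ω).prod (volume.restrict (Ioo 0 T))),
      |l p| ≤ 1 ∧ (0 < u p → l p = 1) ∧ (u p < 0 → l p = -1))
    (hVI : ∀ v : (Fin 3 → ℝ) × ℝ → ℝ, Measurable v →
      (∀ᵐ p ∂((volume.restrict Ω).prod (volume.restrict (Ioo 0 T))),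
        ub ≤ v p ∧ v p ≤ uh) →
      0 ≤ ∫ p, (d p + κ * l p + ν * u p) * (v p - u p)
        ∂((volume.restrict Ω).prod (volume.restrict (Ioo 0 T)))) :
    ∀ᵐ p ∂((volume.restrict Ω).prod (volume.restrict (Ioo 0 T))),
      (u p = 0 ↔ |d p| ≤ κ) := by
  set μ := (volume.restrict Ω).prod (volume.restrict (Ioo 0 T)) with hμdef
  haveI : IsFiniteMeasure (volume.restrict Ω) :=
    ⟨by rw [Measure.restrict_apply_univ]; exact hΩb.measure_lt_top⟩
  haveI : IsFiniteMeasure (volume.restrict (Ioo (0:ℝ) T)) :=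
    ⟨by rw [Measure.restrict_apply_univ]; exact measure_Ioo_lt_top⟩
  haveI : IsFiniteMeasure μ := by rw [hμdef]; infer_instance
  obtain ⟨d', hd'meas, hdd'⟩ : ∃ d', Measurable d' ∧ d =ᵐ[μ] d' := by
    have h := hd.aestronglyMeasurable.aemeasurable
    exact ⟨h.mk d, h.measurable_mk, h.ae_eq_mk⟩
  set f : (Fin 3 → ℝ) × ℝ → ℝ := fun p => d' p + κ * l p + ν * u p with hf
  have hfmeas : Measurable f :=
    (hd'meas.add (hl_meas.const_mul κ)).add (hu_meas.const_mul ν)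
  set v : (Fin 3 → ℝ) × ℝ → ℝ :=
    fun p => if 0 < f p then ub else if f p < 0 then uh else u p with hv
  have hvmeas : Measurable v := by
    refine Measurable.ite (measurableSet_lt measurable_const hfmeas) measurable_const ?_
    exact Measurable.ite (measurableSet_lt hfmeas measurable_const) measurable_const hu_meas
  have hvmem : ∀ᵐ p ∂μ, ub ≤ v p ∧ v p ≤ uh := by
    filter_upwards [hu_mem] with p hp
    rw [hv]; dsimp only; split_ifs <;> constructor <;> linarith [hp.1, hp.2]
  have hVIv := hVI v hvmeas hvmem
  set g : (Fin 3 → ℝ) × ℝ → ℝ :=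
    fun p => (d p + κ * l p + ν * u p) * (v p - u p) with hg
  -- integrability
  have hd'int : Integrable d' μ := (hd.integrable one_le_two).congr hdd'
  have hlint : Integrable l μ := by
    refine (integrable_const (1:ℝ)).mono' hl_meas.aestronglyMeasurable ?_
    filter_upwards [hl_sub] with p hp
    simpa [Real.norm_eq_abs] using hp.1
  have huint : Integrable u μ := by
    refine (integrable_const (max (-ub) uh)).mono' hu_meas.aestronglyMeasurable ?_
    filter_upwards [hu_mem] with p hp
    rw [Real.norm_eq_abs, abs_le]
    constructor
    · have := le_max_left (-ub) uh; linarith [hp.1]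
    · have := le_max_right (-ub) uh; linarith [hp.2]
  have hfint : Integrable f μ := (hd'int.add (hlint.const_mul κ)).add (huint.const_mul ν)
  have hvsub : ∀ᵐ p ∂μ, |v p - u p| ≤ uh - ub := by
    filter_upwards [hu_mem] with p hp
    rw [hv]; dsimp only; split_ifs <;> rw [abs_le] <;> constructor <;> linarith [hp.1, hp.2]
  have hgint : Integrable g μ := by
    refine Integrable.congr (f := fun p => f p * (v p - u p)) ?_ ?_
    · refine (hfint.abs.const_mul (uh - ub)).mono'
        ((hfmeas.mul (hvmeas.sub hu_meas)).aestronglyMeasurable) ?_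
      filter_upwards [hvsub] with p hp
      rw [Real.norm_eq_abs, abs_mul]
      calc |f p| * |v p - u p| ≤ |f p| * (uh - ub) :=
            mul_le_mul_of_nonneg_left hp (abs_nonneg _)
        _ = (uh - ub) * |f p| := mul_comm _ _
    · filter_upwards [hdd'] with p hp
      rw [hg]; dsimp only; rw [hp]
  have hgle : g ≤ᵐ[μ] 0 := by
    filter_upwards [hdd', hu_mem] with p hp hup
    have : g p = f p * (v p - u p) := by rw [hg]; dsimp only; rw [hp]
    simp only [Pi.zero_apply]
    rw [this, hv]; dsimp only
    split_ifs with h1 h2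
    · nlinarith [hup.1]
    · nlinarith [hup.2]
    · have hf0 : f p = 0 := le_antisymm (not_lt.mp h1) (not_lt.mp h2)
      simp [hf0]
  have hint0 : ∫ p, g p ∂μ = 0 := le_antisymm (integral_nonpos_of_ae hgle) hVIv
  have hae0 : ∀ᵐ p ∂μ, g p = 0 := by
    have hneg : 0 ≤ᵐ[μ] fun p => -g p := by
      filter_upwards [hgle] with p hp
      simpa using hp
    have h := (integral_eq_zero_iff_of_nonneg_ae hneg hgint.neg).mp
      (by rw [integral_neg, hint0, neg_zero])
    filter_upwards [h] with p hp
    have : -g p = 0 := hp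
    linarith
  have key : ∀ᵐ p ∂μ, (0 < f p → u p = ub) ∧ (f p < 0 → u p = uh) := by
    filter_upwards [hae0, hdd', hu_mem] with p h0 hdp hup
    have h0' : f p * (v p - u p) = 0 := by
      rw [hg] at h0; dsimp only at h0; rw [hdp] at h0; exact h0
    constructor
    · intro hpos
      rw [hv] at h0'; dsimp only at h0'; rw [if_pos hpos] at h0'
      rcases mul_eq_zero.mp h0' with h | h
      · linarith
      · linarith [hup.1]
    · intro hneg
      rw [hv] at h0'; dsimp only at h0'
      rw [if_neg (by linarith), if_pos hneg] at h0'
      rcases mul_eq_zero.mp h0' with h | h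
      · linarith
      · linarith [hup.2]
  filter_upwards [key, hdd', hl_sub, hu_mem] with p hkey hdp hlp hup
  have hfp : f p = d' p + κ * l p + ν * u p := by rw [hf]
  constructor
  · intro h0u
    have hf0 : f p = 0 := by
      rcases lt_trichotomy (f p) 0 with h | h | h
      · have := hkey.2 h; rw [h0u] at this; linarith
      · exact h
      · have := hkey.1 h; rw [h0u] at this; linarith
    have hdval : d p = -(κ * l p) := by
      rw [hdp]; rw [hfp, h0u] at hf0; linarith
    rw [hdval, abs_neg, abs_mul, abs_of_pos hκ]
    nlinarith [hlp.1, abs_nonneg (l p)]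
  · intro hd_le
    by_contra hune
    rcases lt_trichotomy (u p) 0 with h | h | h
    · have hl1 : l p = -1 := hlp.2.2 h
      have hfge : 0 ≤ f p := by
        by_contra hlt
        have := hkey.2 (not_le.mp hlt)
        linarith
      have hdgt : κ < d p := by rw [hdp]; rw [hfp, hl1] at hfge; nlinarith
      have := le_abs_self (d p)
      linarith
    · exact hune h
    · have hl1 : l p = 1 := hlp.2.1 h
      have hfle : f p ≤ 0 := by
        by_contra hlt
        have := hkey.1 (not_le.mp hlt)
        linarith
      have hdlt : d p < -κ := by rw [hdp]; rw [hfp, hl1] at hfle; nlinarith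
      have := neg_abs_le (d p)
      linarith
end

section
/- Let u ∈ C and λ satisfy the variational inequality (VI), and suppose λ ∈ L^∞(Q) satisfies the pointwise subdifferential conditions for g_Q at u: |λ(x,t)| ≤ 1 a.e. in Q, λ(x,t) = 1 for a.e. (x,t) with u(x,t) > 0, and λ(x,t) = −1 for a.e. (x,t) with u(x,t) < 0. Then λ is uniquely determined; more precisely, λ(x,t) = min{1, max{−1, −d(x,t)/κ}} for almost every (x,t) ∈ Q. -/
open MeasureTheory Set

/-- Full sparsity: if `u ∈ C` and `λ` satisfy the variational inequality and
`λ` satisfies the pointwise subdifferential conditions for `g_Q` at `u`, then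
`λ` is uniquely determined:
`λ(x,t) = min {1, max {-1, -d(x,t)/κ}}` a.e. in `Q`. -/
theorem full_sparsity_lambda_unique
    (Ω : Set (Fin 3 → ℝ)) (hΩo : IsOpen Ω) (hΩb : Bornology.IsBounded Ω)
    (T : ℝ) (hT : 0 < T)
    (ub uh κ ν : ℝ) (hub : ub < 0) (huh : 0 < uh) (hκ : 0 < κ) (hν : 0 < ν)
    (d u l : (Fin 3 → ℝ) × ℝ → ℝ)
    (hd : MemLp d 2 ((volume.restrict Ω).prod (volume.restrict (Ioo 0 T))))
    (hu_meas : Measurable u)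
    (hu_mem : ∀ᵐ p ∂((volume.restrict Ω).prod (volume.restrict (Ioo 0 T))),
      ub ≤ u p ∧ u p ≤ uh)
    (hl_meas : Measurable l)
    (hl_sub : ∀ᵐ p ∂((volume.restrict Ω).prod (volume.restrict (Ioo 0 T))),
      |l p| ≤ 1 ∧ (0 < u p → l p = 1) ∧ (u p < 0 → l p = -1))
    (hVI : ∀ v : (Fin 3 → ℝ) × ℝ → ℝ, Measurable v →
      (∀ᵐ p ∂((volume.restrict Ω).prod (volume.restrict (Ioo 0 T))),
        ub ≤ v p ∧ v p ≤ uh) →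
      0 ≤ ∫ p, (d p + κ * l p + ν * u p) * (v p - u p)
        ∂((volume.restrict Ω).prod (volume.restrict (Ioo 0 T)))) :
    ∀ᵐ p ∂((volume.restrict Ω).prod (volume.restrict (Ioo 0 T))),
      l p = min 1 (max (-1) (-(d p) / κ)) := by
  classical
  set μ := (volume.restrict Ω).prod (volume.restrict (Ioo (0:ℝ) T)) with hμdef
  haveI : IsFiniteMeasure (volume.restrict Ω) :=
    ⟨by rw [Measure.restrict_apply_univ]; exact hΩb.measure_lt_top⟩
  haveI : IsFiniteMeasure (volume.restrict (Ioo (0:ℝ) T)) :=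
    ⟨by rw [Measure.restrict_apply_univ]; exact measure_Ioo_lt_top⟩
  haveI : IsFiniteMeasure μ := by rw [hμdef]; infer_instance
  -- measurable representative of d
  set d' : (Fin 3 → ℝ) × ℝ → ℝ := hd.1.mk d with hd'def
  have hd'_meas : Measurable d' := hd.1.stronglyMeasurable_mk.measurable
  have hdd' : d =ᵐ[μ] d' := hd.1.ae_eq_mk
  -- truncation of u
  set w0 : (Fin 3 → ℝ) × ℝ → ℝ := fun p => max ub (min uh (u p)) with hw0def
  have hw0_meas : Measurable w0 := measurable_const.max (measurable_const.min hu_meas)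
  have hw0_mem : ∀ p, ub ≤ w0 p ∧ w0 p ≤ uh := fun p =>
    ⟨le_max_left _ _, max_le (le_of_lt (hub.trans huh)) (min_le_left _ _)⟩
  have huw0 : u =ᵐ[μ] w0 := by
    filter_upwards [hu_mem] with p hp
    rw [hw0def]; simp only
    rw [min_eq_right hp.2, max_eq_right hp.1]
  -- the multiplier
  set σ : (Fin 3 → ℝ) × ℝ → ℝ := fun p => d' p + κ * l p + ν * w0 p with hσdef
  have hσ_meas : Measurable σ :=
    (hd'_meas.add (hl_meas.const_mul κ)).add (hw0_meas.const_mul ν)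
  -- integrability
  have hd'_int : Integrable d' μ := (hd.integrable one_le_two).congr hdd'
  have hl_int : Integrable l μ := by
    refine Integrable.mono' (integrable_const (1:ℝ)) hl_meas.aestronglyMeasurable ?_
    filter_upwards [hl_sub] with p hp
    simpa using hp.1
  have hw0_int : Integrable w0 μ := by
    refine Integrable.mono' (integrable_const (max (-ub) uh)) hw0_meas.aestronglyMeasurable ?_
    refine Filter.Eventually.of_forall fun p => ?_
    have h1 := (hw0_mem p).1
    have h2 := (hw0_mem p).2
    rw [Real.norm_eq_abs, abs_le]
    constructor
    · have : -ub ≤ max (-ub) uh := le_max_left _ _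
      linarith
    · exact h2.trans (le_max_right _ _)
  have hσ_int : Integrable σ μ :=
    (hd'_int.add (hl_int.const_mul κ)).add (hw0_int.const_mul ν)
  clear_value σ w0 d' μ
  -- key step: the VI forces certain sets to be null
  have key : ∀ (A : Set ((Fin 3 → ℝ) × ℝ)) (w : (Fin 3 → ℝ) × ℝ → ℝ), MeasurableSet A →
      Measurable w → (∀ p, ub ≤ w p ∧ w p ≤ uh) →
      (∀ p ∈ A, σ p * (w p - w0 p) < 0) → ∀ᵐ p ∂μ, p ∉ A := by
    intro A w hA hw hwb hneg
    set v : (Fin 3 → ℝ) × ℝ → ℝ := fun p => if p ∈ A then w p else w0 p with hvdef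
    have hv_meas : Measurable v := Measurable.ite hA hw hw0_meas
    have hv_mem : ∀ᵐ p ∂μ, ub ≤ v p ∧ v p ≤ uh := by
      refine Filter.Eventually.of_forall fun p => ?_
      rw [hvdef]; simp only
      by_cases h : p ∈ A
      · simp [h, hwb p]
      · simp [h, hw0_mem p]
    have h0 := hVI v hv_meas hv_mem
    set f : (Fin 3 → ℝ) × ℝ → ℝ :=
      fun p => (A.indicator (fun q => w q - w0 q) p) * σ p with hfdef
    have hf_int : Integrable f μ := by
      refine hσ_int.bdd_mul ((hw.sub hw0_meas).indicator hA).aestronglyMeasurable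
        (c := uh - ub) (Filter.Eventually.of_forall fun p => ?_)
      by_cases h : p ∈ A
      · rw [indicator_of_mem h, Real.norm_eq_abs, abs_le]
        have h1 := (hwb p).1; have h2 := (hwb p).2
        have h3 := (hw0_mem p).1; have h4 := (hw0_mem p).2
        constructor <;> linarith
      · rw [indicator_of_notMem h]
        simp; linarith
    have hfeq : (fun p => (d p + κ * l p + ν * u p) * (v p - u p)) =ᵐ[μ] f := by
      filter_upwards [hdd', huw0] with p h1 h2
      rw [hfdef, hvdef]; simp only
      by_cases h : p ∈ A
      · rw [indicator_of_mem h]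
        simp only [h, if_true, hσdef, h1, h2]; ring
      · rw [indicator_of_notMem h]
        simp only [h, if_false, h2]; ring
    have h1 : 0 ≤ ∫ p, f p ∂μ := by rwa [integral_congr_ae hfeq] at h0
    have hf_nonpos : ∀ p, f p ≤ 0 := by
      intro p
      by_cases h : p ∈ A
      · rw [hfdef]; simp only [indicator_of_mem h]
        have := hneg p h; nlinarith
      · rw [hfdef]; simp [indicator_of_notMem h]
    have h2 : ∫ p, f p ∂μ ≤ 0 := integral_nonpos hf_nonpos
    have h3 : ∫ p, -f p ∂μ = 0 := by
      rw [integral_neg]; linarith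
    have h4 : (fun p => -f p) =ᵐ[μ] 0 :=
      (integral_eq_zero_iff_of_nonneg_ae
        (Filter.Eventually.of_forall fun p => neg_nonneg.2 (hf_nonpos p)) hf_int.neg).1 h3
    filter_upwards [h4] with p hp
    intro hmem
    have hfp : f p = 0 := by
      have : -f p = 0 := hp
      linarith
    have hlt : f p < 0 := by
      rw [hfdef]; simp only [indicator_of_mem hmem]
      have := hneg p hmem; nlinarith
    linarith
  -- the four null sets
  have hσset1 : MeasurableSet {p | 0 < σ p} := measurableSet_lt measurable_const hσ_meas
  have hσset2 : MeasurableSet {p | σ p < 0} := measurableSet_lt hσ_meas measurable_const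
  have hw0set1 : MeasurableSet {p | 0 < w0 p} := measurableSet_lt measurable_const hw0_meas
  have hw0set2 : MeasurableSet {p | w0 p < 0} := measurableSet_lt hw0_meas measurable_const
  have hw0set3 : MeasurableSet {p | w0 p = 0} :=
    hw0_meas (measurableSet_singleton 0)
  have hhalf_mem : ∀ p, ub ≤ w0 p / 2 ∧ w0 p / 2 ≤ uh := fun p => by
    have h1 := (hw0_mem p).1; have h2 := (hw0_mem p).2
    constructor <;> nlinarith
  have hA1 : ∀ᵐ p ∂μ, ¬(0 < σ p ∧ 0 < w0 p) := by
    refine key ({p | 0 < σ p} ∩ {p | 0 < w0 p}) (fun p => w0 p / 2)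
      (hσset1.inter hw0set1) (hw0_meas.div_const 2) hhalf_mem ?_
    rintro p ⟨h1, h2⟩
    simp only [mem_setOf_eq] at h1 h2
    show σ p * (w0 p / 2 - w0 p) < 0
    have h3 : σ p * (w0 p / 2 - w0 p) = -(σ p * w0 p) / 2 := by ring
    rw [h3]
    have h4 := mul_pos h1 h2
    linarith
  have hA2 : ∀ᵐ p ∂μ, ¬(σ p < 0 ∧ w0 p < 0) := by
    refine key ({p | σ p < 0} ∩ {p | w0 p < 0}) (fun p => w0 p / 2)
      (hσset2.inter hw0set2) (hw0_meas.div_const 2) hhalf_mem ?_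
    rintro p ⟨h1, h2⟩
    simp only [mem_setOf_eq] at h1 h2
    show σ p * (w0 p / 2 - w0 p) < 0
    have h3 : σ p * (w0 p / 2 - w0 p) = -(σ p * w0 p) / 2 := by ring
    rw [h3]
    have h4 := mul_pos_of_neg_of_neg h1 h2
    linarith
  have hA3 : ∀ᵐ p ∂μ, ¬(0 < σ p ∧ w0 p = 0) := by
    refine key ({p | 0 < σ p} ∩ {p | w0 p = 0}) (fun _ => ub)
      (hσset1.inter hw0set3) measurable_const (fun p => ⟨le_refl _, le_of_lt (hub.trans huh)⟩) ?_
    rintro p ⟨h1, h2⟩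
    simp only [mem_setOf_eq] at h1 h2
    rw [h2]; nlinarith
  have hA4 : ∀ᵐ p ∂μ, ¬(σ p < 0 ∧ w0 p = 0) := by
    refine key ({p | σ p < 0} ∩ {p | w0 p = 0}) (fun _ => uh)
      (hσset2.inter hw0set3) measurable_const (fun p => ⟨le_of_lt (hub.trans huh), le_refl _⟩) ?_
    rintro p ⟨h1, h2⟩
    simp only [mem_setOf_eq] at h1 h2
    rw [h2]; nlinarith
  -- conclude pointwise
  filter_upwards [hl_sub, hdd', huw0, hA1, hA2, hA3, hA4] with p hl hde hue n1 n2 n3 n4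
  obtain ⟨hl1, hl2, hl3⟩ := hl
  have hσp : σ p = d' p + κ * l p + ν * w0 p := by simp only [hσdef]
  rcases lt_trichotomy (u p) 0 with hcas | hcas | hcas
  · -- u p < 0 : l p = -1
    have hlp : l p = -1 := hl3 hcas
    have hw0lt : w0 p < 0 := by rw [← hue]; exact hcas
    have hσnn : 0 ≤ σ p := by
      by_contra h
      exact n2 ⟨lt_of_not_ge h, hw0lt⟩
    have hdge : κ ≤ d p := by
      have h5 := hσnn
      rw [hσp, hlp] at h5
      rw [hde]
      nlinarith [mul_pos hν (neg_pos.2 hw0lt)]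
    have h1 : -(d p) / κ ≤ -1 := by
      rw [div_le_iff₀ hκ]; linarith
    rw [hlp, max_eq_left h1, min_eq_right (by linarith : (-1:ℝ) ≤ 1)]
  · -- u p = 0 : σ p = 0
    have hw00 : w0 p = 0 := by rw [← hue]; exact hcas
    have hσle : σ p ≤ 0 := by
      by_contra h
      exact n3 ⟨lt_of_not_ge h, hw00⟩
    have hσge : 0 ≤ σ p := by
      by_contra h
      exact n4 ⟨lt_of_not_ge h, hw00⟩
    have hσ0 : σ p = 0 := le_antisymm hσle hσge
    have hlp : l p = -(d p) / κ := by
      rw [hde, eq_div_iff hκ.ne']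
      rw [hσp, hw00] at hσ0
      linarith
    have hle1 : -(d p) / κ ≤ 1 := by rw [← hlp]; exact (abs_le.1 hl1).2
    have hge1 : -1 ≤ -(d p) / κ := by rw [← hlp]; exact (abs_le.1 hl1).1
    rw [hlp, max_eq_right hge1, min_eq_right hle1]
  · -- u p > 0 : l p = 1
    have hlp : l p = 1 := hl2 hcas
    have hw0gt : 0 < w0 p := by rw [← hue]; exact hcas
    have hσnp : σ p ≤ 0 := by
      by_contra h
      exact n1 ⟨lt_of_not_ge h, hw0gt⟩
    have hdle : d p ≤ -κ := by
      rw [hσp, hlp] at hσnp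
      rw [hde]
      nlinarith [mul_pos hν hw0gt]
    have h1 : 1 ≤ -(d p) / κ := by
      rw [le_div_iff₀ hκ]; linarith
    rw [hlp, max_eq_right (by linarith : (-1:ℝ) ≤ -(d p)/κ), min_eq_left h1]
end

section
/- Let u ∈ C and λ ∈ L^∞(0,T;L²(Ω)) satisfy the variational inequality (VI), suppose λ satisfies the pointwise subdifferential conditions for g_T at u, and suppose that ‖d(·,t)‖_{L²(Ω)} ≤ κ for almost every t ∈ (0,T). Then u = 0 almost everywhere in Q. -/
open MeasureTheory Set

lemma ae_prod_swap_iff {α β : Type*} [MeasurableSpace α] [MeasurableSpace β]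
    {μ : Measure α} {ν : Measure β} [SFinite μ] [SFinite ν] {p : α × β → Prop}
    (hp : MeasurableSet {z : α × β | p z}) :
    (∀ᵐ z ∂μ.prod ν, p z) ↔ ∀ᵐ y ∂ν, ∀ᵐ x ∂μ, p (x, y) := by
  have h : MeasurableSet {z : α × β | p (z.1, z.2)} := hp
  rw [show (∀ᵐ z ∂μ.prod ν, p z) ↔ ∀ᵐ z ∂μ.prod ν, p (z.1, z.2) from Iff.rfl,
    Measure.ae_prod_iff_ae_ae h, Measure.ae_ae_comm h]

set_option maxHeartbeats 2000000 in
/-- If `u ∈ C` and `λ` satisfy the variational inequality, `λ` satisfies the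
pointwise subdifferential conditions for `g_T` at `u`, and
`‖d(·,t)‖_{L²(Ω)} ≤ κ` for a.e. `t ∈ (0,T)`, then `u = 0` a.e. in `Q`. -/
theorem sparsity_in_time_vanishing
    (Ω : Set (Fin 3 → ℝ)) (hΩo : IsOpen Ω) (hΩb : Bornology.IsBounded Ω)
    (T : ℝ) (hT : 0 < T)
    (ub uh κ ν : ℝ) (hub : ub < 0) (huh : 0 < uh) (hκ : 0 < κ) (hν : 0 < ν)
    (d u l : (Fin 3 → ℝ) → ℝ → ℝ)
    (hd : MemLp (fun p : (Fin 3 → ℝ) × ℝ => d p.1 p.2) 2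
      ((volume.restrict Ω).prod (volume.restrict (Ioo 0 T))))
    (hu_meas : Measurable (fun p : (Fin 3 → ℝ) × ℝ => u p.1 p.2))
    (hu_mem : ∀ᵐ p ∂((volume.restrict Ω).prod (volume.restrict (Ioo 0 T))),
      ub ≤ u p.1 p.2 ∧ u p.1 p.2 ≤ uh)
    (hl_meas : Measurable (fun p : (Fin 3 → ℝ) × ℝ => l p.1 p.2))
    (hl_bdd : ∃ M : ℝ, ∀ᵐ t ∂(volume.restrict (Ioo 0 T)),
      Real.sqrt (∫ x in Ω, (l x t) ^ 2) ≤ M)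
    (hVI : ∀ v : (Fin 3 → ℝ) → ℝ → ℝ,
      Measurable (fun p : (Fin 3 → ℝ) × ℝ => v p.1 p.2) →
      (∀ᵐ p ∂((volume.restrict Ω).prod (volume.restrict (Ioo 0 T))),
        ub ≤ v p.1 p.2 ∧ v p.1 p.2 ≤ uh) →
      0 ≤ ∫ t in Ioo 0 T, ∫ x in Ω,
        (d x t + κ * l x t + ν * u x t) * (v x t - u x t))
    (hsub : ∀ᵐ t ∂(volume.restrict (Ioo 0 T)),
      ((∀ᵐ x ∂(volume.restrict Ω), u x t = 0) →
        Real.sqrt (∫ x in Ω, (l x t) ^ 2) ≤ 1) ∧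
      (¬ (∀ᵐ x ∂(volume.restrict Ω), u x t = 0) →
        ∀ᵐ x ∂(volume.restrict Ω),
          l x t = u x t / Real.sqrt (∫ y in Ω, (u y t) ^ 2)))
    (hdsmall : ∀ᵐ t ∂(volume.restrict (Ioo 0 T)),
      Real.sqrt (∫ x in Ω, (d x t) ^ 2) ≤ κ) :
    ∀ᵐ p ∂((volume.restrict Ω).prod (volume.restrict (Ioo 0 T))),
      u p.1 p.2 = 0 := by
  classical
  set μ : Measure (Fin 3 → ℝ) := volume.restrict Ω with hμdef
  set τ : Measure ℝ := volume.restrict (Ioo 0 T) with hτdef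
  haveI : IsFiniteMeasure μ := ⟨by
    rw [hμdef, Measure.restrict_apply_univ]; exact hΩb.measure_lt_top⟩
  haveI : IsFiniteMeasure τ := ⟨by
    rw [hτdef, Measure.restrict_apply_univ, Real.volume_Ioo]
    exact ENNReal.ofReal_lt_top⟩
  -- basic measurability facts
  have hu_sl : ∀ t : ℝ, Measurable fun x => u x t := fun t =>
    hu_meas.comp (measurable_id.prodMk measurable_const)
  have hu_mem_set : MeasurableSet
      {p : (Fin 3 → ℝ) × ℝ | ub ≤ u p.1 p.2 ∧ u p.1 p.2 ≤ uh} :=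
    (measurableSet_le measurable_const hu_meas).inter
      (measurableSet_le hu_meas measurable_const)
  have hu_ae : ∀ᵐ t ∂τ, ∀ᵐ x ∂μ, ub ≤ u x t ∧ u x t ≤ uh :=
    (ae_prod_swap_iff hu_mem_set).1 hu_mem
  -- slice facts for d
  have hd_int : Integrable (fun p : (Fin 3 → ℝ) × ℝ => d p.1 p.2) (μ.prod τ) :=
    hd.integrable one_le_two
  have hd_sl : ∀ᵐ t ∂τ, Integrable (fun x => d x t) μ := hd_int.prod_left_ae
  have hd2_sl : ∀ᵐ t ∂τ, Integrable (fun x => (d x t) ^ 2) μ :=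
    hd.integrable_sq.prod_left_ae
  -- constants
  set C : ℝ := max uh (-ub) with hCdef
  have hC0 : 0 < C := lt_max_of_lt_left huh
  set V : ℝ := (μ Set.univ).toReal * C ^ 2 with hVdef
  have hV0 : 0 ≤ V := mul_nonneg ENNReal.toReal_nonneg (sq_nonneg _)
  set B : ℝ := 2 * κ * Real.sqrt V + ν * V with hBdef
  have hB0 : 0 ≤ B :=
    add_nonneg (by positivity) (mul_nonneg hν.le hV0)
  -- the VI with test function 0
  have h0 : 0 ≤ ∫ t in Ioo 0 T, ∫ x in Ω,
      (d x t + κ * l x t + ν * u x t) * (0 - u x t) :=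
    hVI (fun _ _ => 0) measurable_const
      (ae_of_all _ fun _ => ⟨hub.le, huh.le⟩)
  set G : ℝ → ℝ := fun t => ∫ x, (d x t + κ * l x t + ν * u x t) * (0 - u x t) ∂μ
    with hGdef
  set H : ℝ → ℝ := fun t => ∫ x, (u x t) ^ 2 ∂μ with hHdef
  have hHnn : ∀ t, 0 ≤ H t := fun t => integral_nonneg fun x => sq_nonneg _
  -- key pointwise-in-time estimate
  have key : ∀ᵐ t ∂τ, ν * H t ≤ -G t ∧ |G t| ≤ B ∧ H t ≤ V := by
    filter_upwards [hu_ae, hsub, hdsmall, hd_sl, hd2_sl] with t hbt hsubt hdst hdint hd2int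
    have hubd : ∀ᵐ x ∂μ, ‖u x t‖ ≤ C := by
      filter_upwards [hbt] with x hx
      rw [Real.norm_eq_abs, abs_le]
      constructor
      · have : -C ≤ ub := by
          have := le_max_right uh (-ub); linarith
        linarith [hx.1]
      · exact hx.2.trans (le_max_left _ _)
    have hu2 : MemLp (fun x => u x t) 2 μ :=
      MemLp.of_bound (hu_sl t).aestronglyMeasurable C hubd
    have hIu2 : Integrable (fun x => (u x t) ^ 2) μ := hu2.integrable_sq
    have hSu0 : 0 ≤ H t := hHnn t
    have hSuV : H t ≤ V := by
      have hptw : ∀ᵐ x ∂μ, (u x t) ^ 2 ≤ C ^ 2 := by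
        filter_upwards [hubd] with x hx
        have h' := abs_le.1 (by rwa [Real.norm_eq_abs] at hx)
        exact sq_le_sq' h'.1 h'.2
      calc H t ≤ ∫ _x, C ^ 2 ∂μ := integral_mono_ae hIu2 (integrable_const _) hptw
        _ = (μ Set.univ).toReal * C ^ 2 := by rw [integral_const, smul_eq_mul]; rfl
        _ = V := hVdef.symm
    have hd2nn : 0 ≤ ∫ x, (d x t) ^ 2 ∂μ := integral_nonneg fun x => sq_nonneg _
    have hdsq : ∫ x, (d x t) ^ 2 ∂μ ≤ κ ^ 2 := by
      calc ∫ x, (d x t) ^ 2 ∂μ = (Real.sqrt (∫ x, (d x t) ^ 2 ∂μ)) ^ 2 :=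
            (Real.sq_sqrt hd2nn).symm
        _ ≤ κ ^ 2 := pow_le_pow_left₀ (Real.sqrt_nonneg _) hdst 2
    by_cases hz : ∀ᵐ x ∂μ, u x t = 0
    · have hG0 : G t = 0 := by
        have hcong : (fun x => (d x t + κ * l x t + ν * u x t) * (0 - u x t))
            =ᵐ[μ] fun _ => (0 : ℝ) := by
          filter_upwards [hz] with x hx; simp [hx]
        rw [hGdef]; simp only
        rw [integral_congr_ae hcong, integral_zero]
      have hH0 : H t = 0 := by
        have hcong : (fun x => (u x t) ^ 2) =ᵐ[μ] fun _ => (0 : ℝ) := by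
          filter_upwards [hz] with x hx; simp [hx]
        rw [hHdef]; simp only
        rw [integral_congr_ae hcong, integral_zero]
      refine ⟨by rw [hG0, hH0]; simp, by rw [hG0]; simpa using hB0, hH0 ▸ hV0⟩
    · have hl := hsubt.2 hz
      set N : ℝ := Real.sqrt (∫ y, (u y t) ^ 2 ∂μ) with hNdef
      have hN2 : N ^ 2 = H t := Real.sq_sqrt hSu0
      have hHpos : 0 < H t := by
        rcases lt_or_eq_of_le hSu0 with h | h
        · exact h
        · exfalso
          have h0' : (fun x => (u x t) ^ 2) =ᵐ[μ] 0 :=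
            (integral_eq_zero_iff_of_nonneg_ae
              (ae_of_all _ fun x => sq_nonneg _) hIu2).1 h.symm
          exact hz (h0'.mono fun x hx => by
            have : (u x t) ^ 2 = 0 := hx
            exact pow_eq_zero_iff two_ne_zero |>.1 this)
      have hNpos : 0 < N := Real.sqrt_pos.2 hHpos
      have hNV : N ≤ Real.sqrt V := Real.sqrt_le_sqrt hSuV
      -- integrability of u * d
      have hDU : Integrable (fun x => u x t * d x t) μ :=
        hdint.bdd_mul (hu_sl t).aestronglyMeasurable hubd
      -- pointwise AM-GM
      have key_pt : ∀ a b : ℝ, a * b ≤ N / (2 * κ) * b ^ 2 + κ / (2 * N) * a ^ 2 := by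
        intro a b
        rw [div_mul_eq_mul_div, div_mul_eq_mul_div,
          div_add_div _ _ (by positivity) (by positivity), le_div_iff₀ (by positivity)]
        nlinarith [sq_nonneg (N * b - κ * a)]
      have key_pt' : ∀ a b : ℝ, -(N / (2 * κ) * b ^ 2 + κ / (2 * N) * a ^ 2) ≤ a * b := by
        intro a b
        rw [neg_le, ← neg_mul]
        exact (key_pt (-a) b).trans_eq (by ring_nf)
      have hcomp : Integrable
          (fun x => N / (2 * κ) * (d x t) ^ 2 + κ / (2 * N) * (u x t) ^ 2) μ :=
        (hd2int.const_mul _).add (hIu2.const_mul _)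
      have hsplit2 : ∫ x, (N / (2 * κ) * (d x t) ^ 2 + κ / (2 * N) * (u x t) ^ 2) ∂μ
          = (∫ x, N / (2 * κ) * (d x t) ^ 2 ∂μ) + ∫ x, κ / (2 * N) * (u x t) ^ 2 ∂μ :=
        integral_add (hd2int.const_mul _) (hIu2.const_mul _)
      have hcomp_val : ∫ x, (N / (2 * κ) * (d x t) ^ 2 + κ / (2 * N) * (u x t) ^ 2) ∂μ
          ≤ κ * N := by
        rw [hsplit2, integral_const_mul, integral_const_mul]
        have h1 : N / (2 * κ) * ∫ x, (d x t) ^ 2 ∂μ ≤ N / (2 * κ) * κ ^ 2 :=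
          mul_le_mul_of_nonneg_left hdsq (by positivity)
        have h2 : κ / (2 * N) * ∫ x, (u x t) ^ 2 ∂μ = κ / (2 * N) * N ^ 2 := by
          rw [hN2]
        have h3 : N / (2 * κ) * κ ^ 2 + κ / (2 * N) * N ^ 2 = κ * N := by
          field_simp; ring
        calc N / (2 * κ) * ∫ x, (d x t) ^ 2 ∂μ + κ / (2 * N) * ∫ x, (u x t) ^ 2 ∂μ
            ≤ N / (2 * κ) * κ ^ 2 + κ / (2 * N) * N ^ 2 := by rw [h2]; linarith
          _ = κ * N := h3
      set A : ℝ := ∫ x, u x t * d x t ∂μ with hAdef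
      have hA_ub : A ≤ κ * N := by
        calc A ≤ ∫ x, (N / (2 * κ) * (d x t) ^ 2 + κ / (2 * N) * (u x t) ^ 2) ∂μ :=
              integral_mono_ae hDU hcomp
                (ae_of_all _ fun x => key_pt (u x t) (d x t))
          _ ≤ κ * N := hcomp_val
      have hA_lb : -(κ * N) ≤ A := by
        have : ∫ x, -(N / (2 * κ) * (d x t) ^ 2 + κ / (2 * N) * (u x t) ^ 2) ∂μ ≤ A :=
          integral_mono_ae hcomp.neg hDU
            (ae_of_all _ fun x => key_pt' (u x t) (d x t))
        rw [integral_neg] at this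
        linarith [hcomp_val]
      -- value of G t
      have hG_eq : G t = -A + (-(κ / N) + -ν) * H t := by
        have hcong : (fun x => (d x t + κ * l x t + ν * u x t) * (0 - u x t))
            =ᵐ[μ] fun x => -(u x t * d x t) + (-(κ / N) + -ν) * (u x t) ^ 2 := by
          filter_upwards [hl] with x hx
          rw [hx]
          have hN : N ≠ 0 := hNpos.ne'
          field_simp
          ring
        have hneg : Integrable (fun x => -(u x t * d x t)) μ := hDU.neg
        have hsplit : ∫ x, (-(u x t * d x t) + (-(κ / N) + -ν) * (u x t) ^ 2) ∂μ
            = (∫ x, -(u x t * d x t) ∂μ) + ∫ x, (-(κ / N) + -ν) * (u x t) ^ 2 ∂μ :=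
          integral_add hneg (hIu2.const_mul _)
        rw [hGdef]; simp only
        rw [integral_congr_ae hcong, hsplit, integral_neg, integral_const_mul]
      have hκN : κ / N * H t = κ * N := by
        rw [← hN2]; field_simp
      have hGval : G t = -A - κ * N - ν * H t := by
        rw [hG_eq]
        have : (-(κ / N) + -ν) * H t = -(κ / N * H t) - ν * H t := by ring
        rw [this, hκN]; ring
      have hνH : ν * H t ≤ ν * V := mul_le_mul_of_nonneg_left hSuV hν.le
      have hκNs : κ * N ≤ κ * Real.sqrt V := mul_le_mul_of_nonneg_left hNV hκ.le
      refine ⟨by rw [hGval]; linarith, ?_, hSuV⟩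
      rw [hGval, abs_le, hBdef]
      constructor
      · have hνH0 : 0 ≤ ν * H t := mul_nonneg hν.le hSu0
        linarith
      · have hνH0 : 0 ≤ ν * H t := mul_nonneg hν.le hSu0
        have : 0 ≤ κ * N := mul_nonneg hκ.le hNpos.le
        have h2 : 0 ≤ 2 * κ * Real.sqrt V := by positivity
        linarith [mul_nonneg hν.le hV0]
  -- measurability of G and H over time
  have hf_aesm : AEStronglyMeasurable
      (fun p : (Fin 3 → ℝ) × ℝ =>
        (d p.1 p.2 + κ * l p.1 p.2 + ν * u p.1 p.2) * (0 - u p.1 p.2)) (μ.prod τ) :=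
    ((hd.aestronglyMeasurable.add
        ((hl_meas.const_mul κ).aestronglyMeasurable)).add
      ((hu_meas.const_mul ν).aestronglyMeasurable)).mul
      ((measurable_const.sub hu_meas).aestronglyMeasurable)
  have hG_aesm : AEStronglyMeasurable G τ := by
    have h1 : AEStronglyMeasurable
        (fun z : ℝ × (Fin 3 → ℝ) =>
          (d z.2 z.1 + κ * l z.2 z.1 + ν * u z.2 z.1) * (0 - u z.2 z.1)) (τ.prod μ) :=
      hf_aesm.prod_swap
    exact h1.integral_prod_right'
  have hH_aesm : AEStronglyMeasurable H τ := by
    have h1 : AEStronglyMeasurable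
        (fun z : ℝ × (Fin 3 → ℝ) => (u z.2 z.1) ^ 2) (τ.prod μ) :=
      ((hu_meas.pow_const 2).aestronglyMeasurable).prod_swap
    exact h1.integral_prod_right'
  have hG_int : Integrable G τ := by
    refine Integrable.mono' (integrable_const B) hG_aesm ?_
    filter_upwards [key] with t ht
    rw [Real.norm_eq_abs]; exact ht.2.1
  have hH_int : Integrable H τ := by
    refine Integrable.mono' (integrable_const V) hH_aesm ?_
    filter_upwards [key] with t ht
    rw [Real.norm_eq_abs, abs_le]
    exact ⟨by linarith [hHnn t], ht.2.2⟩
  -- conclude ∫ H = 0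
  have h0' : 0 ≤ ∫ t, G t ∂τ := h0
  have hmono : ∫ t, ν * H t ∂τ ≤ ∫ t, -G t ∂τ :=
    integral_mono_ae (hH_int.const_mul ν) hG_int.neg (key.mono fun t ht => ht.1)
  rw [integral_const_mul, integral_neg] at hmono
  have hHint0 : ∫ t, H t ∂τ = 0 := by
    have hge : 0 ≤ ∫ t, H t ∂τ := integral_nonneg hHnn
    nlinarith
  have hH0ae : H =ᵐ[τ] 0 :=
    (integral_eq_zero_iff_of_nonneg_ae (ae_of_all _ hHnn) hH_int).1 hHint0
  -- conclude u = 0 a.e. in x for a.e. t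
  have hu0 : ∀ᵐ t ∂τ, ∀ᵐ x ∂μ, u x t = 0 := by
    filter_upwards [hH0ae, hu_ae] with t hHt hbt
    have hubd : ∀ᵐ x ∂μ, ‖u x t‖ ≤ C := by
      filter_upwards [hbt] with x hx
      rw [Real.norm_eq_abs, abs_le]
      constructor
      · have : -C ≤ ub := by
          have := le_max_right uh (-ub); linarith
        linarith [hx.1]
      · exact hx.2.trans (le_max_left _ _)
    have hIu2 : Integrable (fun x => (u x t) ^ 2) μ :=
      (MemLp.of_bound (hu_sl t).aestronglyMeasurable C hubd : MemLp _ 2 μ).integrable_sq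
    have hHt0 : H t = 0 := hHt
    have h0'' : (fun x => (u x t) ^ 2) =ᵐ[μ] 0 :=
      (integral_eq_zero_iff_of_nonneg_ae
        (ae_of_all _ fun x => sq_nonneg _) hIu2).1 hHt0
    filter_upwards [h0''] with x hx
    exact pow_eq_zero_iff two_ne_zero |>.1 hx
  exact (ae_prod_swap_iff (measurableSet_eq_fun hu_meas measurable_const)).2 hu0
end

section
/- Let u ∈ C and λ ∈ L^∞(0,T;L²(Ω)) satisfy the variational inequality (VI), and suppose λ satisfies the pointwise subdifferential conditions for g_T at u. Then for almost every t ∈ (0,T) such that u(·,t) = 0 almost everywhere in Ω, one has d(x,t) + κλ(x,t) = 0 for almost every x ∈ Ω. -/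
open MeasureTheory Set

section Aux

/-- sign-like function -/
noncomputable def sgn' (y : ℝ) : ℝ := if 0 < y then 1 else if y < 0 then -1 else 0

lemma sgn'_mul (y : ℝ) : y * sgn' y = |y| := by
  unfold sgn'
  rcases lt_trichotomy 0 y with h | h | h
  · rw [if_pos h, abs_of_pos h, mul_one]
  · simp [← h]
  · rw [if_neg (not_lt.2 h.le), if_pos h, abs_of_neg h]; ring

lemma sgn'_abs_le (y : ℝ) : |sgn' y| ≤ 1 := by
  unfold sgn'
  split_ifs <;> simp

lemma measurable_sgn' : Measurable sgn' := by
  unfold sgn'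
  exact Measurable.ite (measurableSet_lt measurable_const measurable_id) measurable_const
    (Measurable.ite (measurableSet_lt measurable_id measurable_const) measurable_const
      measurable_const)

/-- swap a product-a.e. statement into iterated a.e. with outer over second factor. -/
lemma ae_swap' {α β : Type*} [MeasurableSpace α] [MeasurableSpace β]
    (μ : Measure α) (ν : Measure β) [SFinite μ] [SFinite ν] {P : α × β → Prop}
    (h : ∀ᵐ p ∂μ.prod ν, P p) : ∀ᵐ y ∂ν, ∀ᵐ x ∂μ, P (x, y) := by
  have h2 : ∀ᵐ q ∂ν.prod μ, P q.swap :=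
    (Measure.measurePreserving_swap (μ := ν) (ν := μ)).quasiMeasurePreserving.ae h
  exact Measure.ae_ae_of_ae_prod h2

end Aux

/-- If `u ∈ C` and `λ` satisfy the variational inequality and `λ` satisfies
the pointwise subdifferential conditions for `g_T` at `u`, then for a.e.
`t ∈ (0,T)` with `u(·,t) = 0` a.e. in `Ω`, one has `d(·,t) + κλ(·,t) = 0`
a.e. in `Ω`. -/
theorem sparsity_in_time_gradient_equation
    (Ω : Set (Fin 3 → ℝ)) (hΩo : IsOpen Ω) (hΩb : Bornology.IsBounded Ω)
    (T : ℝ) (hT : 0 < T)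
    (ub uh κ ν : ℝ) (hub : ub < 0) (huh : 0 < uh) (hκ : 0 < κ) (hν : 0 < ν)
    (d u l : (Fin 3 → ℝ) → ℝ → ℝ)
    (hd : MemLp (fun p : (Fin 3 → ℝ) × ℝ => d p.1 p.2) 2
      ((volume.restrict Ω).prod (volume.restrict (Ioo 0 T))))
    (hu_meas : Measurable (fun p : (Fin 3 → ℝ) × ℝ => u p.1 p.2))
    (hu_mem : ∀ᵐ p ∂((volume.restrict Ω).prod (volume.restrict (Ioo 0 T))),
      ub ≤ u p.1 p.2 ∧ u p.1 p.2 ≤ uh)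
    (hl_meas : Measurable (fun p : (Fin 3 → ℝ) × ℝ => l p.1 p.2))
    (hl_bdd : ∃ M : ℝ, ∀ᵐ t ∂(volume.restrict (Ioo 0 T)),
      Real.sqrt (∫ x in Ω, (l x t) ^ 2) ≤ M)
    (hVI : ∀ v : (Fin 3 → ℝ) → ℝ → ℝ,
      Measurable (fun p : (Fin 3 → ℝ) × ℝ => v p.1 p.2) →
      (∀ᵐ p ∂((volume.restrict Ω).prod (volume.restrict (Ioo 0 T))),
        ub ≤ v p.1 p.2 ∧ v p.1 p.2 ≤ uh) →
      0 ≤ ∫ t in Ioo 0 T, ∫ x in Ω,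
        (d x t + κ * l x t + ν * u x t) * (v x t - u x t))
    (hsub : ∀ᵐ t ∂(volume.restrict (Ioo 0 T)),
      ((∀ᵐ x ∂(volume.restrict Ω), u x t = 0) →
        Real.sqrt (∫ x in Ω, (l x t) ^ 2) ≤ 1) ∧
      (¬ (∀ᵐ x ∂(volume.restrict Ω), u x t = 0) →
        ∀ᵐ x ∂(volume.restrict Ω),
          l x t = u x t / Real.sqrt (∫ y in Ω, (u y t) ^ 2))) :
    ∀ᵐ t ∂(volume.restrict (Ioo 0 T)),
      (∀ᵐ x ∂(volume.restrict Ω), u x t = 0) →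
        ∀ᵐ x ∂(volume.restrict Ω), d x t + κ * l x t = 0 := by
  classical
  set μm : Measure (Fin 3 → ℝ) := volume.restrict Ω with hμm
  set νm : Measure ℝ := volume.restrict (Ioo 0 T) with hνm
  haveI : IsFiniteMeasure μm := by
    constructor
    rw [hμm, Measure.restrict_apply_univ]
    exact hΩb.measure_lt_top
  haveI : IsFiniteMeasure νm := by
    constructor
    rw [hνm, Measure.restrict_apply_univ]
    exact measure_Ioo_lt_top
  set π : Measure ((Fin 3 → ℝ) × ℝ) := μm.prod νm with hπ
  -- measurable representative of d
  set d' : (Fin 3 → ℝ) × ℝ → ℝ := hd.aestronglyMeasurable.mk _ with hd'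
  have hd'_meas : Measurable d' := hd.aestronglyMeasurable.stronglyMeasurable_mk.measurable
  have hdd' : (fun p : (Fin 3 → ℝ) × ℝ => d p.1 p.2) =ᵐ[π] d' :=
    hd.aestronglyMeasurable.ae_eq_mk
  have hd_int : Integrable (fun p : (Fin 3 → ℝ) × ℝ => d p.1 p.2) π :=
    hd.integrable (by norm_num)
  have hd'_int : Integrable d' π := hd_int.congr hdd'
  -- the set S of times where the slice of u vanishes a.e.
  set S : Set ℝ := {t | μm {x | u x t ≠ 0} = 0} with hS
  have hS_meas : MeasurableSet S := by
    have h1 : Measurable fun t : ℝ => μm ((fun x => (x, t)) ⁻¹' {p : (Fin 3 → ℝ) × ℝ | u p.1 p.2 ≠ 0}) :=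
      measurable_measure_prodMk_right ((hu_meas (measurableSet_singleton 0)).compl)
    have : S = (fun t : ℝ => μm ((fun x => (x, t)) ⁻¹' {p : (Fin 3 → ℝ) × ℝ | u p.1 p.2 ≠ 0})) ⁻¹' {0} := by
      ext t; simp [hS, Set.preimage]
    rw [this]
    exact h1 (measurableSet_singleton 0)
  have hS_iff : ∀ t : ℝ, t ∈ S ↔ (∀ᵐ x ∂μm, u x t = 0) := by
    intro t
    rw [ae_iff]
    rfl
  -- u vanishes a.e. on Ω × S
  have hu0 : ∀ᵐ p ∂π, p.2 ∈ S → u p.1 p.2 = 0 := by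
    rw [ae_iff]
    have hNm : MeasurableSet {p : (Fin 3 → ℝ) × ℝ | p.2 ∈ S ∧ u p.1 p.2 ≠ 0} :=
      (hS_meas.preimage measurable_snd).inter ((hu_meas (measurableSet_singleton 0)).compl)
    have : {p : (Fin 3 → ℝ) × ℝ | ¬(p.2 ∈ S → u p.1 p.2 = 0)} =
        {p : (Fin 3 → ℝ) × ℝ | p.2 ∈ S ∧ u p.1 p.2 ≠ 0} := by
      ext p; simp [Classical.not_imp]
    rw [this, hπ, Measure.prod_apply_symm hNm]
    have hz : ∀ t : ℝ, μm {x | t ∈ S ∧ ¬ u x t = 0} = 0 := by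
      intro t
      by_cases ht : t ∈ S
      · have hsub2 : {x | t ∈ S ∧ ¬ u x t = 0} ⊆ {x | u x t ≠ 0} := by
          intro x hx; exact hx.2
        exact measure_mono_null hsub2 ht
      · have he : {x : Fin 3 → ℝ | t ∈ S ∧ ¬ u x t = 0} = ∅ := by
          ext x; simp [ht]
        simp [he]
    simp only [Set.preimage_setOf_eq]
    simp [hz]
  -- the step size
  set δ : ℝ := min uh (-ub) with hδ
  have hδpos : 0 < δ := lt_min huh (by linarith)
  have hδuh : δ ≤ uh := min_le_left _ _
  have hδub : ub ≤ -δ := by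
    have := min_le_right uh (-ub); linarith
  -- main per-n statement
  have key : ∀ n : ℕ, ∀ᵐ p ∂π, (p.2 ∈ S ∧ |l p.1 p.2| ≤ (n : ℝ)) →
      d' p + κ * l p.1 p.2 = 0 := by
    intro n
    set w : (Fin 3 → ℝ) × ℝ → ℝ := fun p => d' p + κ * l p.1 p.2 with hw
    have hw_meas : Measurable w := hd'_meas.add (hl_meas.const_mul κ)
    set ψ : (Fin 3 → ℝ) → ℝ → ℝ := fun x t =>
      if t ∈ S then (if |l x t| ≤ (n : ℝ) then -δ * sgn' (w (x, t)) else 0) else 0 with hψ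
    have hψ_meas : Measurable (fun p : (Fin 3 → ℝ) × ℝ => ψ p.1 p.2) := by
      apply Measurable.ite (hS_meas.preimage measurable_snd)
      · apply Measurable.ite
        · exact measurableSet_le hl_meas.abs measurable_const
        · exact (measurable_sgn'.comp hw_meas).const_mul (-δ)
        · exact measurable_const
      · exact measurable_const
    have hψ_bdd : ∀ x t, |ψ x t| ≤ δ := by
      intro x t
      simp only [hψ]
      split_ifs with h1 h2
      · rw [abs_mul, abs_neg, abs_of_pos hδpos]
        calc δ * |sgn' (w (x, t))| ≤ δ * 1 := by
              exact mul_le_mul_of_nonneg_left (sgn'_abs_le _) hδpos.le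
          _ = δ := mul_one δ
      · simp [hδpos.le]
      · simp [hδpos.le]
    set v : (Fin 3 → ℝ) → ℝ → ℝ := fun x t => u x t + ψ x t with hv
    have hv_meas : Measurable (fun p : (Fin 3 → ℝ) × ℝ => v p.1 p.2) :=
      hu_meas.add hψ_meas
    have hv_mem : ∀ᵐ p ∂π, ub ≤ v p.1 p.2 ∧ v p.1 p.2 ≤ uh := by
      filter_upwards [hu_mem, hu0] with p hb h0
      by_cases hpS : p.2 ∈ S
      · have hu0p : u p.1 p.2 = 0 := h0 hpS
        have := hψ_bdd p.1 p.2
        have h1 : -δ ≤ ψ p.1 p.2 := neg_le_of_abs_le this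
        have h2 : ψ p.1 p.2 ≤ δ := le_of_abs_le this
        constructor
        · simp only [hv, hu0p, zero_add]; linarith
        · simp only [hv, hu0p, zero_add]; linarith
      · have : ψ p.1 p.2 = 0 := by simp only [hψ, if_neg hpS]
        simp only [hv, this, add_zero]
        exact hb
    have hVIv := hVI v hv_meas hv_mem
    -- the simplified integrand
    set G : (Fin 3 → ℝ) → ℝ → ℝ := fun x t =>
      if t ∈ S ∧ |l x t| ≤ (n : ℝ) then -δ * |w (x, t)| else 0 with hG
    have hG_meas : Measurable (fun p : (Fin 3 → ℝ) × ℝ => G p.1 p.2) := by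
      apply Measurable.ite
      · exact (hS_meas.preimage measurable_snd).inter
          (measurableSet_le hl_meas.abs measurable_const)
      · exact (hw_meas.abs).const_mul (-δ)
      · exact measurable_const
    have hFG : ∀ᵐ p ∂π,
        (d p.1 p.2 + κ * l p.1 p.2 + ν * u p.1 p.2) * (v p.1 p.2 - u p.1 p.2)
          = G p.1 p.2 := by
      filter_upwards [hdd', hu0] with p hdp h0
      have hvu : v p.1 p.2 - u p.1 p.2 = ψ p.1 p.2 := by simp only [hv]; ring
      rw [hvu]
      by_cases hpS : p.2 ∈ S
      · have hu0p : u p.1 p.2 = 0 := h0 hpS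
        by_cases hln : |l p.1 p.2| ≤ (n : ℝ)
        · simp only [hψ, hG]
          rw [if_pos hpS, if_pos hln,
            if_pos (show p.2 ∈ S ∧ |l p.1 p.2| ≤ (n : ℝ) from ⟨hpS, hln⟩)]
          rw [hdp, hu0p]
          have : d' p + κ * l p.1 p.2 + ν * 0 = w p := by simp [hw]
          rw [this]
          calc w p * (-δ * sgn' (w p)) = -δ * (w p * sgn' (w p)) := by ring
            _ = -δ * |w p| := by rw [sgn'_mul]
        · simp only [hψ, hG]
          rw [if_pos hpS, if_neg hln,
            if_neg (show ¬(p.2 ∈ S ∧ |l p.1 p.2| ≤ (n : ℝ)) from fun h => hln h.2), mul_zero]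
      · simp only [hψ, hG]
        rw [if_neg hpS,
          if_neg (show ¬(p.2 ∈ S ∧ |l p.1 p.2| ≤ (n : ℝ)) from fun h => hpS h.1), mul_zero]
    have hG_int : Integrable (fun p : (Fin 3 → ℝ) × ℝ => G p.1 p.2) π := by
      apply Integrable.mono' ((hd'_int.abs.const_mul δ).add
        (integrable_const (δ * κ * n)))
      · exact hG_meas.aestronglyMeasurable
      · apply Filter.Eventually.of_forall
        intro p
        simp only [hG, Pi.add_apply]
        split_ifs with h
        · rw [Real.norm_eq_abs, abs_mul, abs_neg, abs_of_pos hδpos, abs_abs]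
          have h1 : |w p| ≤ |d' p| + κ * (n : ℝ) := by
            have : |w p| ≤ |d' p| + |κ * l p.1 p.2| := abs_add_le _ _
            have h2 : |κ * l p.1 p.2| = κ * |l p.1 p.2| := by
              rw [abs_mul, abs_of_pos hκ]
            nlinarith [h.2, abs_nonneg (l p.1 p.2)]
          calc δ * |w p| ≤ δ * (|d' p| + κ * n) := by
                exact mul_le_mul_of_nonneg_left h1 hδpos.le
            _ = δ * |d' p| + δ * κ * n := by ring
        · simp only [norm_zero]
          have hn0 : (0:ℝ) ≤ (n:ℝ) := Nat.cast_nonneg n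
          have ha : 0 ≤ δ * |d' p| := mul_nonneg hδpos.le (abs_nonneg _)
          have hb : 0 ≤ δ * κ * (n:ℝ) := mul_nonneg (mul_nonneg hδpos.le hκ.le) hn0
          linarith
    -- the two iterated integrals agree
    have hiter : (∫ t, (∫ x,
        (d x t + κ * l x t + ν * u x t) * (v x t - u x t) ∂μm) ∂νm)
        = ∫ t, ∫ x, G x t ∂μm ∂νm := by
      have hsw := ae_swap' μm νm hFG
      apply integral_congr_ae
      filter_upwards [hsw] with t ht
      exact integral_congr_ae ht
    have hprod : (∫ t, ∫ x, G x t ∂μm ∂νm) = ∫ p, G p.1 p.2 ∂π := by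
      rw [hπ, MeasureTheory.integral_prod _ hG_int]
      exact (MeasureTheory.integral_integral_swap
        (f := fun x t => G x t) hG_int).symm
    have hle : ∀ p : (Fin 3 → ℝ) × ℝ, G p.1 p.2 ≤ 0 := by
      intro p
      simp only [hG]
      split_ifs with h
      · nlinarith [abs_nonneg (w (p.1, p.2)), hδpos]
      · exact le_refl 0
    have hint0 : (∫ p, G p.1 p.2 ∂π) = 0 := by
      have h1 : (∫ p, G p.1 p.2 ∂π) ≤ 0 := integral_nonpos hle
      have h2 : 0 ≤ ∫ p, G p.1 p.2 ∂π := by rw [← hprod, ← hiter]; exact hVIv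
      linarith
    have hzero : (fun p : (Fin 3 → ℝ) × ℝ => -(G p.1 p.2)) =ᵐ[π] 0 := by
      rw [← integral_eq_zero_iff_of_nonneg (fun p => neg_nonneg.2 (hle p)) hG_int.neg]
      rw [integral_neg, hint0, neg_zero]
    filter_upwards [hzero] with p hp hcond
    have hGp : G p.1 p.2 = 0 := by
      have : -(G p.1 p.2) = 0 := hp
      linarith
    have : -δ * |w (p.1, p.2)| = 0 := by
      rw [← hGp]
      simp only [hG, if_pos hcond]
    have habs : |w (p.1, p.2)| = 0 := by
      by_contra hne
      have h1 : 0 < |w (p.1, p.2)| := lt_of_le_of_ne (abs_nonneg _) (Ne.symm hne)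
      nlinarith
    have : w p = 0 := abs_eq_zero.mp habs
    exact this
  -- combine over all n
  have hall : ∀ᵐ p ∂π, ∀ n : ℕ, (p.2 ∈ S ∧ |l p.1 p.2| ≤ (n : ℝ)) →
      d' p + κ * l p.1 p.2 = 0 := ae_all_iff.2 key
  have hfin : ∀ᵐ p ∂π, p.2 ∈ S → d p.1 p.2 + κ * l p.1 p.2 = 0 := by
    filter_upwards [hall, hdd'] with p hp hdp hpS
    obtain ⟨n, hn⟩ := exists_nat_ge |l p.1 p.2|
    rw [hdp]
    exact hp n ⟨hpS, hn⟩
  have hfin2 := ae_swap' μm νm hfin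
  filter_upwards [hfin2] with t ht htu
  have htS : t ∈ S := (hS_iff t).2 htu
  filter_upwards [ht] with x hx
  exact hx htS
end
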